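/- arXiv:2110.00285 — 4 statements merged into one kernel-verified Lean document; each statement's English description precedes it below -/
import Mathlib

section
/- For every matrix A ∈ ℝ_max^{n×n} and every λ ∈ ℝ_max, the set W(A,λ) is a max-plus subspace of ℝ_max^n, i.e., it contains ℰ and is closed under ⊕ and scalar multiplication ⊗. -/
open Filter

noncomputable section

/-- The max-plus semiring ℝ_max = ℝ ∪ {ε}, with ε = ⊥ = −∞,
`a ⊕ b = max a b` and `a ⊗ b = a + b` (the `Add` of `WithBot ℝ`). -/
abbrev RMax : Type := WithBot ℝ

/-- Max-plus vectors. -/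
abbrev Vec (ι : Type) : Type := ι → RMax

/-- The max-plus zero vector ℰ. -/
def zeroV (ι : Type) : Vec ι := fun _ => (⊥ : RMax)

/-- Max-plus "negation" (inversion for ⊗), fixing ⊥. -/
def mpNeg (a : RMax) : RMax := WithBot.map (fun r : ℝ => -r) a

section Defs

variable {ι κ₁ κ₂ κ₃ : Type}

/-- Matrix (or vector) sum `M ⊕ N`, entrywise max. -/
def mpAddM (M N : Matrix κ₁ κ₂ RMax) : Matrix κ₁ κ₂ RMax := fun i j => max (M i j) (N i j)

/-- Scalar multiplication `l ⊗ M` of a matrix. -/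
def smulM (l : RMax) (M : Matrix κ₁ κ₂ RMax) : Matrix κ₁ κ₂ RMax := fun i j => l + M i j

/-- Scalar multiplication `l ⊗ x` of a vector. -/
def smulV (l : RMax) (x : Vec ι) : Vec ι := fun i => l + x i

/-- Max-plus matrix product `M ⊗ N`. -/
def mpMul [Fintype κ₂] (M : Matrix κ₁ κ₂ RMax) (N : Matrix κ₂ κ₃ RMax) : Matrix κ₁ κ₃ RMax :=
  fun i j => Finset.univ.sup fun k => M i k + N k j

/-- Max-plus matrix-vector product `M ⊗ x`. -/
def mpMulVec [Fintype κ₂] (M : Matrix κ₁ κ₂ RMax) (x : Vec κ₂) : Vec κ₁ :=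
  fun i => Finset.univ.sup fun j => M i j + x j

/-- The max-plus identity matrix `E_n` (0 on the diagonal, ε elsewhere). -/
def mpId [DecidableEq ι] : Matrix ι ι RMax := fun i j => if i = j then (0 : RMax) else ⊥

/-- Max-plus inverse of a generalized permutation matrix:
the transpose with the finite entries negated. -/
def genInv (P : Matrix ι ι RMax) : Matrix ι ι RMax := fun i j => mpNeg (P j i)

/-- The max-plus determinant `det A = ⊕_π ⊗_i a_{i π(i)}`. -/
def mpDet [Fintype ι] [DecidableEq ι] (A : Matrix ι ι RMax) : RMax :=
  Finset.univ.sup fun π : Equiv.Perm ι => ∑ i, A i (π i)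

/-- Max-plus matrix powers. -/
def mpPow [Fintype ι] [DecidableEq ι] (P : Matrix ι ι RMax) : ℕ → Matrix ι ι RMax
  | 0 => mpId
  | k + 1 => mpMul P (mpPow P k)

/-- The Kleene star `P* = E ⊕ P ⊕ P^{⊗2} ⊕ ⋯ ⊕ P^{⊗(n−1)}`. -/
def mpStar [Fintype ι] [DecidableEq ι] (P : Matrix ι ι RMax) : Matrix ι ι RMax :=
  fun i j => (Finset.range (Fintype.card ι)).sup fun k => mpPow P k i j

/-- A multi-circuit on the vertex set `ι`: a union of vertex-disjoint elementary circuits,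
encoded by its vertex set `verts` together with the successor permutation `perm`,
which is the identity outside `verts`.  Its edge set is `{(i, perm i) | i ∈ verts}`
and its length is `verts.card`. -/
structure MultiCircuit (ι : Type) where
  verts : Finset ι
  perm : Equiv.Perm ι
  fixes : ∀ i, i ∉ verts → perm i = i

/-- The weight `w(C)` of a multi-circuit with respect to the matrix `A`. -/
def mcWeight (A : Matrix ι ι RMax) (C : MultiCircuit ι) : RMax :=
  ∑ i ∈ C.verts, A i (C.perm i)

/-- The multi-circuit `C` lies in the graph `G(A)` (all its edges have weight ≠ ε). -/
def InGraph (A : Matrix ι ι RMax) (C : MultiCircuit ι) : Prop :=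
  ∀ i ∈ C.verts, A i (C.perm i) ≠ ⊥

/-- A multi-circuit consisting of a single (elementary) circuit. -/
def IsCircuit (C : MultiCircuit ι) : Prop :=
  C.verts.Nonempty ∧ ∀ i ∈ C.verts, ∀ j ∈ C.verts, C.perm.SameCycle i j

/-- `D` is a critical circuit of `G(A)`: an elementary circuit of `G(A)` whose average
weight is maximal among all elementary circuits of `G(A)`
(averages `w/ℓ` are compared without division via `ℓ' • w ≥ ℓ • w'`). -/
def IsCritical (A : Matrix ι ι RMax) (D : MultiCircuit ι) : Prop :=
  IsCircuit D ∧ InGraph A D ∧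
    ∀ D' : MultiCircuit ι, IsCircuit D' → InGraph A D' →
      D.verts.card • mcWeight A D' ≤ D'.verts.card • mcWeight A D

/-- `ρ` is the maximum average weight of the (elementary) circuits of `G(A)`,
taken to be ε if `G(A)` has no circuit. -/
def IsMaxCycleMean (A : Matrix ι ι RMax) (ρ : RMax) : Prop :=
  (∀ D : MultiCircuit ι, IsCircuit D → InGraph A D → mcWeight A D ≤ D.verts.card • ρ) ∧
    ((∃ D : MultiCircuit ι, IsCircuit D ∧ InGraph A D ∧ mcWeight A D = D.verts.card • ρ) ∨
      (ρ = ⊥ ∧ ∀ D : MultiCircuit ι, IsCircuit D → ¬InGraph A D))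

/-- `l` is a (geometric) eigenvalue of `A`: `A ⊗ x = l ⊗ x` for some `x ≠ ℰ`. -/
def IsEigen [Fintype ι] (A : Matrix ι ι RMax) (l : RMax) : Prop :=
  ∃ x : Vec ι, x ≠ zeroV ι ∧ mpMulVec A x = smulV l x

variable [Fintype ι] [DecidableEq ι]

/-- The value `w(C) ⊗ l^{⊗(n − ℓ(C))}` of the term of `χ_A(l)` corresponding to the
multi-circuit `C`. -/
def ValAt (A : Matrix ι ι RMax) (C : MultiCircuit ι) (l : RMax) : RMax :=
  mcWeight A C + (Fintype.card ι - C.verts.card) • l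

/-- `C` is `μ`-maximal (for a real `μ`): it attains
`χ_A(μ) = max_C (w(C) + (n − ℓ(C))·μ)`. -/
def MaximalAt (A : Matrix ι ι RMax) (C : MultiCircuit ι) (μ : ℝ) : Prop :=
  ∀ C' : MultiCircuit ι, ValAt A C' (μ : RMax) ≤ ValAt A C (μ : RMax)

/-- `C` is `l`-maximal, for `l ∈ ℝ_max`; for `l = ε` this means `μ`-maximal for all
sufficiently small real `μ`. -/
def IsLamMax (A : Matrix ι ι RMax) (C : MultiCircuit ι) (l : RMax) : Prop :=
  (∀ μ : ℝ, l = (μ : RMax) → MaximalAt A C μ) ∧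
    (l = ⊥ → ∃ μ₀ : ℝ, ∀ μ : ℝ, μ ≤ μ₀ → MaximalAt A C μ)

/-- `l` is an algebraic eigenvalue of `A`, i.e. a root of the characteristic polynomial
`χ_A(t)`: a real `l` is a root iff there are two `l`-maximal multi-circuits of different
lengths, and `ε` is a root iff `G(A)` contains no multi-circuit of length `n`. -/
def IsAlgEigen (A : Matrix ι ι RMax) (l : RMax) : Prop :=
  (l ≠ ⊥ ∧ ∃ C C' : MultiCircuit ι, IsLamMax A C l ∧ IsLamMax A C' l ∧
      C.verts.card ≠ C'.verts.card) ∨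
    (l = ⊥ ∧ ∀ C : MultiCircuit ι, C.verts.card = Fintype.card ι → ¬InGraph A C)

open Classical in
/-- The multiplicity of `l` as a root of the characteristic polynomial `χ_A(t)`:
for a real `l` it is the difference between the maximal and the minimal length of an
`l`-maximal multi-circuit; for `l = ε` it is `n` minus the maximal length of a
multi-circuit of `G(A)`.  It is `0` when `l` is not a root. -/
noncomputable def rootMult (A : Matrix ι ι RMax) (l : RMax) : ℕ :=
  if l = ⊥ then
    Fintype.card ι - sSup {m : ℕ | ∃ C : MultiCircuit ι, InGraph A C ∧ C.verts.card = m}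
  else
    sSup {m : ℕ | ∃ C : MultiCircuit ι, IsLamMax A C l ∧ C.verts.card = m} -
      sInf {m : ℕ | ∃ C : MultiCircuit ι, IsLamMax A C l ∧ C.verts.card = m}

/-- The matrix `A_C`. -/
def matC (A : Matrix ι ι RMax) (C : MultiCircuit ι) : Matrix ι ι RMax :=
  fun i j => if i ∈ C.verts ∧ j = C.perm i then A i j else ⊥

/-- The matrix `A_{∖C}`. -/
def matNotC (A : Matrix ι ι RMax) (C : MultiCircuit ι) : Matrix ι ι RMax :=
  fun i j => if i ∈ C.verts ∧ j = C.perm i then ⊥ else A i j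

/-- The diagonal matrix `E_C`. -/
def eC (C : MultiCircuit ι) : Matrix ι ι RMax :=
  fun i j => if i = j ∧ i ∈ C.verts then (0 : RMax) else ⊥

/-- The diagonal matrix `E_{∖C}`. -/
def eNotC (C : MultiCircuit ι) : Matrix ι ι RMax :=
  fun i j => if i = j ∧ i ∉ C.verts then (0 : RMax) else ⊥

/-- `W(A,l,C) = {x : (A_{∖C} ⊕ l ⊗ E_C) ⊗ x = (A_C ⊕ l ⊗ E_{∖C}) ⊗ x}`. -/
def WAC (A : Matrix ι ι RMax) (l : RMax) (C : MultiCircuit ι) : Set (Vec ι) :=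
  {x | mpMulVec (mpAddM (matNotC A C) (smulM l (eC C))) x =
       mpMulVec (mpAddM (matC A C) (smulM l (eNotC C))) x}

/-- `B_{A,l,C} = (A_C ⊕ l ⊗ E_{∖C})^{−1} ⊗ (A_{∖C} ⊕ l ⊗ E_C)`. -/
def Bmat (A : Matrix ι ι RMax) (l : RMax) (C : MultiCircuit ι) : Matrix ι ι RMax :=
  mpMul (genInv (mpAddM (matC A C) (smulM l (eNotC C)))) (mpAddM (matNotC A C) (smulM l (eC C)))

/-- Assumption (★): for each `l ∈ ℝ_max`, any two distinct `l`-maximal multi-circuits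
of `G(A)` have different lengths. -/
def StarAssumption (A : Matrix ι ι RMax) : Prop :=
  ∀ l : RMax, ∀ C C' : MultiCircuit ι, IsLamMax A C l → IsLamMax A C' l →
    C.verts.card = C'.verts.card → C = C'

/-- The perturbed matrix `A(ζ;δ)` with entries `a_{ij} − ζ_{ij}·δ` (ε stays ε). -/
def perturb (A : Matrix ι ι RMax) (ζ : Matrix ι ι ℝ) (δ : ℝ) : Matrix ι ι RMax :=
  fun i j => A i j + ((-(ζ i j * δ) : ℝ) : RMax)

/-- The set `Z` of perturbation directions `ζ ∈ [0,1]^{n×n}` for which `A(ζ;δ)`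
satisfies (★) for all sufficiently small `δ > 0`. -/
def Zset (A : Matrix ι ι RMax) : Set (Matrix ι ι ℝ) :=
  {ζ | (∀ i j, ζ i j ∈ Set.Icc (0 : ℝ) 1) ∧
    ∃ δ' : ℝ, 0 < δ' ∧ ∀ δ : ℝ, 0 < δ → δ < δ' → StarAssumption (perturb A ζ δ)}

/-- The interval `B(l, r) = [l − r, l + r] ⊆ ℝ_max` (and `B(ε, r) = {ε}`). -/
def mpBall (l : RMax) (r : ℝ) : Set RMax :=
  {l' | (l = ⊥ ∧ l' = ⊥) ∨ ∃ x y : ℝ, l = (x : RMax) ∧ l' = (y : RMax) ∧ |y - x| ≤ r}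

/-- Convergence in `ℝ_max` as `δ → +0`. -/
def RMaxTendsto (f : ℝ → RMax) (a : RMax) : Prop :=
  (a = ⊥ → ∀ M : ℝ, ∀ᶠ δ in nhdsWithin 0 (Set.Ioi (0 : ℝ)), f δ < (M : RMax)) ∧
    (∀ x : ℝ, a = (x : RMax) → ∀ ε : ℝ, 0 < ε →
      ∀ᶠ δ in nhdsWithin 0 (Set.Ioi (0 : ℝ)), ∃ y : ℝ, f δ = (y : RMax) ∧ |y - x| < ε)

/-- The (max-plus) sum `⊕_k U_k` of a family of subsets of `ℝ_max^n`. -/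
def setSum {κ : Type} (U : κ → Set (Vec ι)) : Set (Vec ι) :=
  {x | ∃ s : Finset κ, ∃ f : κ → Vec ι, (∀ k ∈ s, f k ∈ U k) ∧
    x = fun i => s.sup fun k => f k i}

/-- The limit `lim_{δ→+0} S(δ)` of a parametrized family of subsets of `ℝ_max^n`. -/
def setLim (S : ℝ → Set (Vec ι)) : Set (Vec ι) :=
  {x | ∃ g : ℝ → Vec ι, (∀ δ : ℝ, 0 < δ → g δ ∈ S δ) ∧
    ∀ i : ι, RMaxTendsto (fun δ => g δ i) (x i)}

/-- The sum `⊕_{l' ∈ S} W(A', l', C_{l'})`, where `C_{l'}` is an `l'`-maximal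
multi-circuit of `G(A')`. -/
def perturbSum (A' : Matrix ι ι RMax) (S : Set RMax) : Set (Vec ι) :=
  setSum fun l : S =>
    {x | ∃ C : MultiCircuit ι, IsLamMax A' C (l : RMax) ∧ x ∈ WAC A' (l : RMax) C}

/-- The algebraic eigenspace
`W(A,l) = ⋂_{ζ∈Z} lim_{δ→+0} ⊕_{l' ∈ B(l,nδ)} W(A(ζ;δ), l', C_{l'}(ζ;δ))`. -/
def algEigenspace (A : Matrix ι ι RMax) (l : RMax) : Set (Vec ι) :=
  ⋂ ζ ∈ Zset A, setLim fun δ => perturbSum (perturb A ζ δ) (mpBall l (Fintype.card ι * δ))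

/-- The max-plus span of a set of vectors: all finite max-plus linear combinations. -/
def mpSpan (S : Set (Vec ι)) : Set (Vec ι) :=
  {x | ∃ s : Finset (Vec ι), ↑s ⊆ S ∧ ∃ c : Vec ι → RMax,
    x = fun i => s.sup fun v => c v + v i}

/-- `B` is a basis of `U`: a minimal spanning set. -/
def IsBasis (B U : Set (Vec ι)) : Prop :=
  mpSpan B = U ∧ ∀ B' : Set (Vec ι), B' ⊆ B → mpSpan B' = U → B' = B

/-- Tropical orthogonality: the maximum in `ᵗx ⊗ y = ⊕_i x_i ⊗ y_i` is attained
at least twice (a maximum equal to ε counting as attained by all indices). -/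
def Orthogonal (x y : Vec ι) : Prop :=
  (Finset.univ.sup fun i => x i + y i) = ⊥ ∨
    ∃ i j : ι, i ≠ j ∧ x i + y i = (Finset.univ.sup fun k => x k + y k) ∧
      x j + y j = (Finset.univ.sup fun k => x k + y k)

/-- The tropical kernel of a matrix: vectors for which, in every row, the maximum is
attained at least twice (a maximum equal to ε counting as attained by all indices). -/
def tropKernel {κ : Type} (A : Matrix κ ι RMax) : Set (Vec ι) :=
  {x | ∀ i : κ, (Finset.univ.sup fun j => A i j + x j) = ⊥ ∨
    ∃ j k : ι, j ≠ k ∧ A i j + x j = (Finset.univ.sup fun j' => A i j' + x j') ∧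
      A i k + x k = (Finset.univ.sup fun j' => A i j' + x j')}

/-- `A` is (tropically) nonsingular: the maximum in `det A` is attained by exactly
one permutation. -/
def Nonsingular (A : Matrix ι ι RMax) : Prop :=
  ∃! π : Equiv.Perm ι, (∑ i, A i (π i)) = mpDet A

/-- The minor `A^{(r,c)}`, deleting row `r` and column `c`. -/
def mpMinor {n : ℕ} (A : Matrix (Fin (n + 1)) (Fin (n + 1)) RMax) (r c : Fin (n + 1)) :
    Matrix (Fin n) (Fin n) RMax :=
  fun i j => A (r.succAbove i) (c.succAbove j)

/-- The max-plus adjugate, `adj(A)_{ij} = det A^{(j,i)}`. -/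
def mpAdj {n : ℕ} (A : Matrix (Fin (n + 1)) (Fin (n + 1)) RMax) :
    Matrix (Fin (n + 1)) (Fin (n + 1)) RMax :=
  fun i j => mpDet (mpMinor A j i)

/-- The submatrix `[A_C]_{KK}` with `K = V(C)`. -/
def subPC (A : Matrix ι ι RMax) (C : MultiCircuit ι) :
    Matrix {k // k ∈ C.verts} {k // k ∈ C.verts} RMax :=
  fun i j => matC A C i.1 j.1

/-- The submatrix `[A_{∖C}]_{KK}` with `K = V(C)`. -/
def subPNC (A : Matrix ι ι RMax) (C : MultiCircuit ι) :
    Matrix {k // k ∈ C.verts} {k // k ∈ C.verts} RMax :=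
  fun i j => matNotC A C i.1 j.1

/-- The matrix `M = [A_C]_{KK}^{−1} ⊗ [A_{∖C}]_{KK}`. -/
def xiM (A : Matrix ι ι RMax) (C : MultiCircuit ι) :
    Matrix {k // k ∈ C.verts} {k // k ∈ C.verts} RMax :=
  mpMul (genInv (subPC A C)) (subPNC A C)

/-- `M* ⊗ ([A_C]_{KK}^{−1} ⊗ [A]_{KL}) ⊗ [x]_L`, the `K`-part of `ξ_{A,C}(x)`. -/
def xiVec (A : Matrix ι ι RMax) (C : MultiCircuit ι) (x : Vec ι) : Vec {k // k ∈ C.verts} :=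
  mpMulVec (mpStar (xiM A C)) (mpMulVec (genInv (subPC A C))
    (fun k : {k // k ∈ C.verts} =>
      (Finset.univ.filter fun j : ι => j ∉ C.verts).sup fun j => A k.1 j + x j))

/-- The linear map `ξ_{A,C} : ℝ_max^n → ℝ_max^n`. -/
def xi (A : Matrix ι ι RMax) (C : MultiCircuit ι) (x : Vec ι) : Vec ι :=
  fun i => if h : i ∈ C.verts then xiVec A C x ⟨i, h⟩ else x i

end Defs

end


/-! ## Auxiliary development -/

section AuxBasic

lemma RMax.nsmul_ne_bot {a : RMax} (h : a ≠ ⊥) (k : ℕ) : k • a ≠ ⊥ := by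
  induction k with
  | zero => simp
  | succ m ih => rw [succ_nsmul]; exact WithBot.add_ne_bot.2 ⟨ih, h⟩

lemma RMax.nsmul_coe (μ : ℝ) (k : ℕ) : (k • (↑μ : RMax)) = ((k * μ : ℝ) : RMax) := by
  induction k with
  | zero => simp
  | succ m ih =>
      rw [succ_nsmul, ih, ← WithBot.coe_add, WithBot.coe_inj]
      push_cast
      ring

lemma RMax.term_ne_bot {α : Type*} [DecidableEq α] {s : Finset α} {f : α → RMax}
    (h : (∑ i ∈ s, f i) ≠ ⊥) {i : α} (hi : i ∈ s) : f i ≠ ⊥ := by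
  intro hb
  exact h (by rw [← Finset.add_sum_erase _ f hi, hb, WithBot.bot_add])

/-- real value of a non-bot element -/
noncomputable def RMax.toR (a : RMax) : ℝ := WithBot.unbotD 0 a

lemma RMax.coe_toR {a : RMax} (h : a ≠ ⊥) : ((RMax.toR a : ℝ) : RMax) = a := by
  lift a to ℝ using h; rfl

lemma RMax.toR_coe (r : ℝ) : RMax.toR (↑r : RMax) = r := rfl

lemma RMax.coe_sum {α : Type*} [DecidableEq α] (s : Finset α) (f : α → RMax)
    (h : ∀ i ∈ s, f i ≠ ⊥) : (∑ i ∈ s, f i) = ((∑ i ∈ s, RMax.toR (f i) : ℝ) : RMax) := by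
  induction s using Finset.induction with
  | empty => simp
  | @insert a s' hx ih =>
      rw [Finset.sum_insert hx, Finset.sum_insert hx,
        ih (fun i hi => h i (Finset.mem_insert_of_mem hi)),
        WithBot.coe_add, RMax.coe_toR (h a (Finset.mem_insert_self a s'))]

lemma RMax.add_sup (c a b : RMax) : c + (a ⊔ b) = (c + a) ⊔ (c + b) :=
  (max_add_add_left c a b).symm

lemma RMax.sup_add (a b c : RMax) : (a ⊔ b) + c = (a + c) ⊔ (b + c) :=
  (max_add_add_right a b c).symm

lemma RMax.add_finset_sup {α : Type*} (c : RMax) (s : Finset α) (f : α → RMax) :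
    c + s.sup f = s.sup fun j => c + f j := by
  exact Finset.comp_sup_eq_sup_comp (fun x => c + x)
    (fun x y => RMax.add_sup c x y) (by simp)

lemma RMax.sup_congr_max {α : Type*} (s : Finset α) (f g : α → RMax) :
    s.sup (fun j => f j ⊔ g j) = s.sup f ⊔ s.sup g := Finset.sup_sup

end AuxBasic

section AuxWAC

variable {ι : Type} [Fintype ι] [DecidableEq ι]

/-- weight of the extended edge (matrix edge on `C.verts`, `l`-loop elsewhere) at row `i` -/
noncomputable def bterm (A : Matrix ι ι RMax) (C : MultiCircuit ι) (l : RMax) (i : ι) : RMax :=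
  if i ∈ C.verts then A i (C.perm i) else l

/-- row maximum including the `l`-loop -/
noncomputable def rowMax (A : Matrix ι ι RMax) (l : RMax) (x : Vec ι) (i : ι) : RMax :=
  (Finset.univ.sup fun j => A i j + x j) ⊔ (l + x i)

/-- the `C`-term of row `i` -/
noncomputable def ct (A : Matrix ι ι RMax) (C : MultiCircuit ι) (l : RMax) (x : Vec ι) (i : ι) :
    RMax := bterm A C l i + x (C.perm i)

/-- the non-`C` terms of row `i` -/
noncomputable def ot (A : Matrix ι ι RMax) (C : MultiCircuit ι) (l : RMax) (x : Vec ι) (i : ι) :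
    RMax :=
  (Finset.univ.sup fun j => matNotC A C i j + x j) ⊔ (if i ∈ C.verts then l + x i else ⊥)

lemma mpMulVec_mpAddM (M N : Matrix ι ι RMax) (x : Vec ι) (i : ι) :
    mpMulVec (mpAddM M N) x i = mpMulVec M x i ⊔ mpMulVec N x i := by
  unfold mpMulVec mpAddM
  rw [← RMax.sup_congr_max]
  exact Finset.sup_congr rfl fun j _ => RMax.sup_add _ _ _

lemma sup_single_ne_bot (f : ι → RMax) (j₀ : ι) (h : ∀ j, j ≠ j₀ → f j = ⊥) :
    Finset.univ.sup f = f j₀ := by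
  apply le_antisymm
  · exact Finset.sup_le fun j _ => by
      by_cases hj : j = j₀
      · subst hj; exact le_rfl
      · rw [h j hj]; exact bot_le
  · exact Finset.le_sup (Finset.mem_univ j₀)

lemma mpMulVec_matC (A : Matrix ι ι RMax) (C : MultiCircuit ι) (x : Vec ι) (i : ι) :
    mpMulVec (matC A C) x i
      = if i ∈ C.verts then A i (C.perm i) + x (C.perm i) else ⊥ := by
  unfold mpMulVec matC
  by_cases hi : i ∈ C.verts
  · rw [if_pos hi, sup_single_ne_bot _ (C.perm i) ?_]
    · rw [if_pos ⟨hi, rfl⟩]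
    · intro j hj
      rw [if_neg (by tauto), WithBot.bot_add]
  · rw [if_neg hi]
    apply le_bot_iff.mp
    exact Finset.sup_le fun j _ => by rw [if_neg (by tauto), WithBot.bot_add]

lemma mpMulVec_smulM_eC (C : MultiCircuit ι) (l : RMax) (x : Vec ι)
    (i : ι) : mpMulVec (smulM l (eC C)) x i = if i ∈ C.verts then l + x i else ⊥ := by
  unfold mpMulVec smulM eC
  by_cases hi : i ∈ C.verts
  · rw [if_pos hi, sup_single_ne_bot _ i ?_]
    · rw [if_pos ⟨rfl, hi⟩, add_zero]
    · intro j hj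
      rw [if_neg (by tauto), WithBot.add_bot, WithBot.bot_add]
  · rw [if_neg hi]
    apply le_bot_iff.mp
    exact Finset.sup_le fun j _ => by
      rw [if_neg (by tauto), WithBot.add_bot, WithBot.bot_add]

lemma mpMulVec_smulM_eNotC (C : MultiCircuit ι) (l : RMax) (x : Vec ι)
    (i : ι) : mpMulVec (smulM l (eNotC C)) x i = if i ∈ C.verts then ⊥ else l + x i := by
  unfold mpMulVec smulM eNotC
  by_cases hi : i ∈ C.verts
  · rw [if_pos hi]
    apply le_bot_iff.mp
    exact Finset.sup_le fun j _ => by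
      rw [if_neg (by tauto), WithBot.add_bot, WithBot.bot_add]
  · rw [if_neg hi, sup_single_ne_bot _ i ?_]
    · rw [if_pos ⟨rfl, hi⟩, add_zero]
    · intro j hj
      rw [if_neg (by tauto), WithBot.add_bot, WithBot.bot_add]

lemma mem_WAC_iff (A : Matrix ι ι RMax) (l : RMax) (C : MultiCircuit ι) (x : Vec ι) :
    x ∈ WAC A l C ↔ ∀ i, ot A C l x i = ct A C l x i := by
  unfold WAC
  rw [Set.mem_setOf_eq, funext_iff]
  apply forall_congr'
  intro i
  rw [mpMulVec_mpAddM, mpMulVec_mpAddM, mpMulVec_matC, mpMulVec_smulM_eC, mpMulVec_smulM_eNotC]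
  unfold ot ct bterm mpMulVec
  by_cases hi : i ∈ C.verts
  · simp [hi]
  · simp [hi, C.fixes i hi]

end AuxWAC


section AuxMerge

variable {ι : Type} [Fintype ι] [DecidableEq ι]

lemma matNotC_le_A (A : Matrix ι ι RMax) (C : MultiCircuit ι) (i j : ι) :
    matNotC A C i j ≤ A i j := by
  unfold matNotC; split
  · exact bot_le
  · exact le_rfl

lemma ot_le_rowMax (A : Matrix ι ι RMax) (C : MultiCircuit ι) (l : RMax) (x : Vec ι) (i : ι) :
    ot A C l x i ≤ rowMax A l x i := by
  unfold ot rowMax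
  apply sup_le_sup
  · exact Finset.sup_mono_fun fun j _ => add_le_add (matNotC_le_A A C i j) le_rfl
  · split
    · exact le_rfl
    · exact bot_le

lemma ct_le_rowMax (A : Matrix ι ι RMax) (C : MultiCircuit ι) (l : RMax) (x : Vec ι) (i : ι) :
    ct A C l x i ≤ rowMax A l x i := by
  unfold ct bterm rowMax
  by_cases hi : i ∈ C.verts
  · rw [if_pos hi]
    exact le_sup_of_le_left (Finset.le_sup (f := fun j => A i j + x j) (Finset.mem_univ (C.perm i)))
  · rw [if_neg hi, C.fixes i hi]
    exact le_sup_right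

lemma ot_sup_ct (A : Matrix ι ι RMax) (C : MultiCircuit ι) (l : RMax) (x : Vec ι) (i : ι) :
    ot A C l x i ⊔ ct A C l x i = rowMax A l x i := by
  have hA : (Finset.univ.sup fun j => A i j + x j)
      = (Finset.univ.sup fun j => matNotC A C i j + x j) ⊔ mpMulVec (matC A C) x i := by
    have hp : ∀ j, A i j + x j = (matNotC A C i j + x j) ⊔ (matC A C i j + x j) := fun j => by
      rw [← RMax.sup_add]
      congr 1
      unfold matNotC matC
      by_cases h : i ∈ C.verts ∧ j = C.perm i <;> simp [h]
    rw [Finset.sup_congr rfl (fun j _ => hp j), RMax.sup_congr_max]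
    rfl
  unfold ot ct bterm rowMax
  rw [hA, mpMulVec_matC]
  by_cases hi : i ∈ C.verts
  · rw [if_pos hi, if_pos hi, if_pos hi]
    exact sup_right_comm _ _ _
  · rw [if_neg hi, if_neg hi, if_neg hi, C.fixes i hi]

/-- the empty multi-circuit -/
def emptyMC : MultiCircuit ι := ⟨∅, 1, fun _ _ => rfl⟩

lemma valAt_eq_sum (A : Matrix ι ι RMax) (C : MultiCircuit ι) (l : RMax) :
    ValAt A C l = ∑ i, bterm A C l i := by
  have h1 : ∑ i ∈ C.verts, bterm A C l i = mcWeight A C :=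
    Finset.sum_congr rfl fun i hi => by unfold bterm; rw [if_pos hi]
  have h2 : ∑ i ∈ C.vertsᶜ, bterm A C l i = (Fintype.card ι - C.verts.card) • l := by
    calc ∑ i ∈ C.vertsᶜ, bterm A C l i = ∑ _i ∈ C.vertsᶜ, l :=
          Finset.sum_congr rfl fun i hi => by
            unfold bterm; rw [if_neg (Finset.mem_compl.mp hi)]
    _ = C.vertsᶜ.card • l := Finset.sum_const l
    _ = _ := by rw [Finset.card_compl]
  rw [← Finset.sum_add_sum_compl C.verts (bterm A C l), h1, h2]
  rfl

lemma valAt_empty (A : Matrix ι ι RMax) (l : RMax) :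
    ValAt A (emptyMC (ι := ι)) l = (Fintype.card ι) • l := by
  unfold ValAt mcWeight emptyMC
  simp

lemma valAt_ne_bot_of_max {A : Matrix ι ι RMax} {C : MultiCircuit ι} {μ : ℝ}
    (hC : MaximalAt A C μ) : ValAt A C (↑μ) ≠ ⊥ := by
  intro h
  have h2 := hC emptyMC
  rw [h, valAt_empty, RMax.nsmul_coe] at h2
  exact WithBot.coe_ne_bot (le_bot_iff.mp h2)

lemma bterm_ne_bot {A : Matrix ι ι RMax} {C : MultiCircuit ι} {μ : ℝ}
    (hC : MaximalAt A C μ) (i : ι) : bterm A C (↑μ) i ≠ ⊥ :=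
  RMax.term_ne_bot (by rw [← valAt_eq_sum]; exact valAt_ne_bot_of_max hC) (Finset.mem_univ i)

theorem WAC_merge_real (A : Matrix ι ι RMax) (μ : ℝ) (C C' : MultiCircuit ι)
    (hC : MaximalAt A C μ) (hC' : MaximalAt A C' μ) {x : Vec ι}
    (hx : x ∈ WAC A (↑μ) C) : x ∈ WAC A (↑μ) C' := by
  classical
  set l : RMax := (↑μ : RMax) with hl
  rw [mem_WAC_iff] at hx ⊢
  have Hct : ∀ i, ct A C l x i = rowMax A l x i := fun i => by
    rw [← ot_sup_ct A C l x i, hx i, sup_idem]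
  have Hot : ∀ i, ot A C l x i = rowMax A l x i := fun i => (hx i).trans (Hct i)
  have bne : ∀ i, bterm A C l i ≠ ⊥ := fun i => bterm_ne_bot hC i
  have bne' : ∀ i, bterm A C' l i ≠ ⊥ := fun i => bterm_ne_bot hC' i
  set π := C.perm with hπ
  set π' := C'.perm with hπ'
  set γ : Equiv.Perm ι := π⁻¹ * π' with hγ
  have hπγ : ∀ j, π (γ j) = π' j := fun j => by
    rw [hγ, Equiv.Perm.mul_apply, Equiv.Perm.inv_def, Equiv.apply_symm_apply]
  have Htight : ∀ i, bterm A C' l i + x (π (γ i)) ≤ bterm A C l i + x (π i) := fun i => by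
    rw [hπγ]
    calc bterm A C' l i + x (π' i) = ct A C' l x i := rfl
    _ ≤ rowMax A l x i := ct_le_rowMax _ _ _ _ _
    _ = ct A C l x i := (Hct i).symm
  have KEY : ∀ i, ct A C' l x i = rowMax A l x i := by
    by_contra hk
    push_neg at hk
    obtain ⟨i0, hi0⟩ := hk
    have hlt : ct A C' l x i0 < rowMax A l x i0 :=
      lt_of_le_of_ne (ct_le_rowMax _ _ _ _ _) hi0
    set O : Finset ι := Finset.univ.filter (fun j => γ.SameCycle i0 j) with hO
    have memO : ∀ {j}, j ∈ O ↔ γ.SameCycle i0 j := fun {j} => by simp [hO]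
    have hi0O : i0 ∈ O := memO.2 (Equiv.Perm.SameCycle.refl γ i0)
    have γO : ∀ {j}, j ∈ O → γ j ∈ O := fun {j} hj =>
      memO.2 ((Equiv.Perm.sameCycle_apply_right).2 (memO.1 hj))
    have γinvO : ∀ {j}, j ∈ O → γ⁻¹ j ∈ O := fun {j} hj =>
      memO.2 ((memO.1 hj).trans ⟨-1, by simp⟩)
    have xreal : ∀ j ∈ O, x (π j) ≠ ⊥ := by
      have base : x (π i0) ≠ ⊥ := by
        have h1 : rowMax A l x i0 ≠ ⊥ := fun hb => by
          rw [hb] at hlt; exact not_lt_bot hlt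
        have h2 : ct A C l x i0 ≠ ⊥ := by rw [Hct i0]; exact h1
        intro hb
        apply h2
        unfold ct
        rw [← hπ, hb, WithBot.add_bot]
      have main : ∀ k : ℕ, ∀ j, (γ ^ k) j = i0 → x (π j) ≠ ⊥ := by
        intro k
        induction k with
        | zero => intro j hj; simp at hj; rwa [hj]
        | succ m ih =>
            intro j hj
            have h2 : (γ ^ m) (γ j) = i0 := by
              rw [← Equiv.Perm.mul_apply, ← pow_succ]
              exact hj
            have hreal : x (π (γ j)) ≠ ⊥ := ih _ h2
            have hne : bterm A C' l j + x (π (γ j)) ≠ ⊥ :=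
              WithBot.add_ne_bot.2 ⟨bne' j, hreal⟩
            intro hb
            apply hne
            apply le_bot_iff.mp
            calc bterm A C' l j + x (π (γ j)) ≤ bterm A C l j + x (π j) := Htight j
            _ = ⊥ := by rw [hb, WithBot.add_bot]
      intro j hj
      obtain ⟨k, -, hk⟩ := ((memO.1 hj).symm).exists_pow_eq'
      exact main k j hk
    have xreal' : ∀ j ∈ O, x (π' j) ≠ ⊥ := fun j hj => by
      rw [← hπγ]; exact xreal _ (γO hj)
    have hGF : ∀ j ∈ O, RMax.toR (bterm A C' l j) + RMax.toR (x (π' j))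
        ≤ RMax.toR (bterm A C l j) + RMax.toR (x (π j)) := by
      intro j hj
      have h := Htight j
      rw [hπγ] at h
      rw [← RMax.coe_toR (bne' j), ← RMax.coe_toR (xreal' j hj), ← WithBot.coe_add,
        ← RMax.coe_toR (bne j), ← RMax.coe_toR (xreal j hj), ← WithBot.coe_add] at h
      exact_mod_cast h
    have hstrict : RMax.toR (bterm A C' l i0) + RMax.toR (x (π' i0))
        < RMax.toR (bterm A C l i0) + RMax.toR (x (π i0)) := by
      have h : ct A C' l x i0 < ct A C l x i0 := by
        rw [Hct i0]; exact hlt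
      unfold ct at h
      rw [← hπ, ← hπ'] at h
      rw [← RMax.coe_toR (bne' i0), ← RMax.coe_toR (xreal' i0 hi0O), ← WithBot.coe_add,
        ← RMax.coe_toR (bne i0), ← RMax.coe_toR (xreal i0 hi0O), ← WithBot.coe_add] at h
      exact_mod_cast h
    have hsum : ∑ j ∈ O, RMax.toR (bterm A C l j) > ∑ j ∈ O, RMax.toR (bterm A C' l j) := by
      have h1 := Finset.sum_lt_sum hGF ⟨i0, hi0O, hstrict⟩
      have h2 : ∑ j ∈ O, RMax.toR (x (π' j)) = ∑ j ∈ O, RMax.toR (x (π j)) := by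
        have hc : ∀ j ∈ O, RMax.toR (x (π' j)) = RMax.toR (x (π (γ j))) := fun j _ => by
          rw [hπγ]
        rw [Finset.sum_congr rfl hc]
        apply Finset.sum_bijective γ γ.bijective
        · intro i
          constructor
          · exact fun hi => γO hi
          · intro hi
            have := γinvO hi
            simpa using this
        · intro i _
          rfl
      rw [Finset.sum_add_distrib, Finset.sum_add_distrib, h2] at h1
      linarith
    set t : ι → ι := fun i => if i ∈ O then π i else π' i with ht
    have tinj : Function.Injective t := by
      intro a b hab
      rw [ht] at hab
      simp only at hab
      by_cases ha : a ∈ O <;> by_cases hb : b ∈ O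
      · rw [if_pos ha, if_pos hb] at hab
        exact π.injective hab
      · exfalso
        rw [if_pos ha, if_neg hb, ← hπγ b] at hab
        have h3 : a = γ b := π.injective hab
        rw [h3] at ha
        have h4 := γinvO ha
        rw [Equiv.Perm.inv_def, Equiv.symm_apply_apply] at h4
        exact hb h4
      · exfalso
        rw [if_neg ha, if_pos hb, ← hπγ a] at hab
        have h3 : γ a = b := π.injective hab
        have h4 := γinvO (h3 ▸ hb)
        rw [Equiv.Perm.inv_def, Equiv.symm_apply_apply] at h4
        exact ha h4
      · rw [if_neg ha, if_neg hb] at hab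
        exact π'.injective hab
    have tbij : Function.Bijective t := Finite.injective_iff_bijective.mp tinj
    have hfix : ∀ i, i ∉ (C.verts ∩ O) ∪ (C'.verts \ O) → (Equiv.ofBijective t tbij) i = i := by
      intro i hi
      rw [Finset.mem_union, Finset.mem_inter, Finset.mem_sdiff] at hi
      push_neg at hi
      show t i = i
      rw [ht]
      by_cases hiO : i ∈ O
      · simp only [if_pos hiO]
        exact C.fixes i (fun hc => hi.1 hc hiO)
      · simp only [if_neg hiO]
        exact C'.fixes i (fun hc => hiO (hi.2 hc))
    set D : MultiCircuit ι := ⟨(C.verts ∩ O) ∪ (C'.verts \ O), Equiv.ofBijective t tbij, hfix⟩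
      with hD
    have hbD : ∀ i, bterm A D l i = if i ∈ O then bterm A C l i else bterm A C' l i := by
      intro i
      by_cases hiO : i ∈ O
      · rw [if_pos hiO]
        have hv : (i ∈ D.verts) ↔ i ∈ C.verts := by
          rw [hD]
          simp [hiO]
        have hperm : D.perm i = π i := by
          show t i = π i
          rw [ht]
          simp only
          rw [if_pos hiO]
        unfold bterm
        by_cases hc : i ∈ C.verts
        · rw [if_pos (hv.2 hc), if_pos hc, hperm]
        · rw [if_neg (fun h => hc (hv.1 h)), if_neg hc]
      · rw [if_neg hiO]
        have hv : (i ∈ D.verts) ↔ i ∈ C'.verts := by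
          rw [hD]
          simp [hiO]
        have hperm : D.perm i = π' i := by
          show t i = π' i
          rw [ht]
          simp only
          rw [if_neg hiO]
        unfold bterm
        by_cases hc : i ∈ C'.verts
        · rw [if_pos (hv.2 hc), if_pos hc, hperm]
        · rw [if_neg (fun h => hc (hv.1 h)), if_neg hc]
    have hval : ValAt A D l ≤ ValAt A C' l := hC' D
    rw [valAt_eq_sum, valAt_eq_sum,
      ← Finset.sum_add_sum_compl O (bterm A D l), ← Finset.sum_add_sum_compl O (bterm A C' l)]
      at hval
    have hDO : ∑ i ∈ O, bterm A D l i = ∑ i ∈ O, bterm A C l i :=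
      Finset.sum_congr rfl fun i hi => by rw [hbD, if_pos hi]
    have hDO' : ∑ i ∈ Oᶜ, bterm A D l i = ∑ i ∈ Oᶜ, bterm A C' l i :=
      Finset.sum_congr rfl fun i hi => by rw [hbD, if_neg (Finset.mem_compl.mp hi)]
    rw [hDO, hDO'] at hval
    rw [RMax.coe_sum O _ (fun i _ => bne i), RMax.coe_sum O _ (fun i _ => bne' i),
      RMax.coe_sum Oᶜ _ (fun i _ => bne' i), ← WithBot.coe_add, ← WithBot.coe_add] at hval
    have hreal := WithBot.coe_le_coe.mp hval
    linarith
  intro i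
  rw [KEY i]
  apply le_antisymm
  · exact ot_le_rowMax _ _ _ _ _
  · by_cases h1 : i ∈ C.verts <;> by_cases h2 : i ∈ C'.verts
    · by_cases h3 : C.perm i = C'.perm i
      · have heq : ot A C' l x i = ot A C l x i := by
          unfold ot
          congr 1
          · apply Finset.sup_congr rfl
            intro j _
            unfold matNotC
            by_cases hj : j = C.perm i <;> simp [h1, h2, h3, hj]
          · simp [h1, h2]
        rw [heq, Hot i]
      · have hterm : matNotC A C' i (C.perm i) = A i (C.perm i) := by
          unfold matNotC
          rw [if_neg]
          rintro ⟨-, hp⟩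
          exact h3 hp
        calc rowMax A l x i = ct A C l x i := (Hct i).symm
        _ = A i (C.perm i) + x (C.perm i) := by unfold ct bterm; rw [if_pos h1]
        _ = matNotC A C' i (C.perm i) + x (C.perm i) := by rw [hterm]
        _ ≤ Finset.univ.sup (fun j => matNotC A C' i j + x j) :=
            Finset.le_sup (f := fun j => matNotC A C' i j + x j) (Finset.mem_univ (C.perm i))
        _ ≤ ot A C' l x i := le_sup_left
    · have hterm : matNotC A C' i (C.perm i) = A i (C.perm i) := by
        unfold matNotC
        rw [if_neg (fun h => h2 h.1)]
      calc rowMax A l x i = ct A C l x i := (Hct i).symm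
      _ = A i (C.perm i) + x (C.perm i) := by unfold ct bterm; rw [if_pos h1]
      _ = matNotC A C' i (C.perm i) + x (C.perm i) := by rw [hterm]
      _ ≤ Finset.univ.sup (fun j => matNotC A C' i j + x j) :=
          Finset.le_sup (f := fun j => matNotC A C' i j + x j) (Finset.mem_univ (C.perm i))
      _ ≤ ot A C' l x i := le_sup_left
    · calc rowMax A l x i = ct A C l x i := (Hct i).symm
      _ = l + x i := by unfold ct bterm; rw [if_neg h1, C.fixes i h1]
      _ = (if i ∈ C'.verts then l + x i else ⊥) := by rw [if_pos h2]
      _ ≤ ot A C' l x i := le_sup_right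
    · have heq : ot A C' l x i = ot A C l x i := by
        unfold ot
        congr 1
        · apply Finset.sup_congr rfl
          intro j _
          unfold matNotC
          simp [h1, h2]
        · simp [h1, h2]
      rw [heq, Hot i]

end AuxMerge


section AuxBot

variable {ι : Type} [Fintype ι] [DecidableEq ι]

lemma lamMax_bot_card_eq (A : Matrix ι ι RMax) {C C' : MultiCircuit ι}
    (hC : IsLamMax A C ⊥) (hC' : IsLamMax A C' ⊥) : C.verts.card = C'.verts.card := by
  obtain ⟨μ₀, h₀⟩ := hC.2 rfl
  obtain ⟨μ₀', h₀'⟩ := hC'.2 rfl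
  set μ₁ : ℝ := min μ₀ μ₀' with hμ₁
  set μ₂ : ℝ := μ₁ - 1 with hμ₂
  have m1C : MaximalAt A C μ₁ := h₀ μ₁ (min_le_left _ _)
  have m2C : MaximalAt A C μ₂ := h₀ μ₂ (by rw [hμ₂]; linarith [min_le_left μ₀ μ₀'])
  have m1C' : MaximalAt A C' μ₁ := h₀' μ₁ (min_le_right _ _)
  have m2C' : MaximalAt A C' μ₂ := h₀' μ₂ (by rw [hμ₂]; linarith [min_le_right μ₀ μ₀'])
  have e₁ : ValAt A C (↑μ₁) = ValAt A C' (↑μ₁) := le_antisymm (m1C' C) (m1C C')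
  have e₂ : ValAt A C (↑μ₂) = ValAt A C' (↑μ₂) := le_antisymm (m2C' C) (m2C C')
  have hw : mcWeight A C ≠ ⊥ := by
    intro hb
    apply valAt_ne_bot_of_max m1C
    unfold ValAt
    rw [hb, WithBot.bot_add]
  have hw' : mcWeight A C' ≠ ⊥ := by
    intro hb
    apply valAt_ne_bot_of_max m1C'
    unfold ValAt
    rw [hb, WithBot.bot_add]
  have hval : ∀ μ : ℝ, ValAt A C (↑μ)
      = ((RMax.toR (mcWeight A C)
          + ((Fintype.card ι - C.verts.card : ℕ) : ℝ) * μ : ℝ) : RMax) := by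
    intro μ
    unfold ValAt
    rw [RMax.nsmul_coe]
    conv_lhs => rw [← RMax.coe_toR hw]
    rw [← WithBot.coe_add]
  have hval' : ∀ μ : ℝ, ValAt A C' (↑μ)
      = ((RMax.toR (mcWeight A C')
          + ((Fintype.card ι - C'.verts.card : ℕ) : ℝ) * μ : ℝ) : RMax) := by
    intro μ
    unfold ValAt
    rw [RMax.nsmul_coe]
    conv_lhs => rw [← RMax.coe_toR hw']
    rw [← WithBot.coe_add]
  rw [hval, hval'] at e₁ e₂
  have r₁ := WithBot.coe_inj.mp e₁
  have r₂ := WithBot.coe_inj.mp e₂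
  have hkk : ((Fintype.card ι - C.verts.card : ℕ) : ℝ)
      = ((Fintype.card ι - C'.verts.card : ℕ) : ℝ) := by
    rw [hμ₂] at r₂
    linear_combination r₁ - r₂
  have hkk' : Fintype.card ι - C.verts.card = Fintype.card ι - C'.verts.card :=
    Nat.cast_injective hkk
  have h1 : C.verts.card ≤ Fintype.card ι := Finset.card_le_univ _
  have h2 : C'.verts.card ≤ Fintype.card ι := Finset.card_le_univ _
  omega

lemma WAC_merge (A : Matrix ι ι RMax) (l' : RMax) (hstar : l' = ⊥ → StarAssumption A)
    (C C' : MultiCircuit ι) (hC : IsLamMax A C l') (hC' : IsLamMax A C' l')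
    {z : Vec ι} (hz : z ∈ WAC A l' C') : z ∈ WAC A l' C := by
  cases l' with
  | none =>
      have : C = C' := (hstar rfl) ⊥ C C' hC hC' (lamMax_bot_card_eq A hC hC')
      rw [this]
      exact hz
  | some r =>
      exact WAC_merge_real A r C' C (hC'.1 r rfl) (hC.1 r rfl) hz

end AuxBot

section AuxSubspace

variable {ι : Type} [Fintype ι] [DecidableEq ι]

lemma mpMulVec_zero (M : Matrix ι ι RMax) : mpMulVec M (zeroV ι) = zeroV ι := by
  funext i
  apply le_bot_iff.mp
  exact Finset.sup_le fun j _ => by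
    show M i j + ⊥ ≤ ⊥
    rw [WithBot.add_bot]

lemma WAC_zero (A : Matrix ι ι RMax) (l : RMax) (C : MultiCircuit ι) :
    zeroV ι ∈ WAC A l C := by
  show _ = _
  rw [mpMulVec_zero, mpMulVec_zero]

lemma mpMulVec_max (M : Matrix ι ι RMax) (x y : Vec ι) :
    mpMulVec M (fun i => x i ⊔ y i) = fun i => mpMulVec M x i ⊔ mpMulVec M y i := by
  funext i
  unfold mpMulVec
  rw [← RMax.sup_congr_max]
  exact Finset.sup_congr rfl fun j _ => RMax.add_sup _ _ _

lemma WAC_max {A : Matrix ι ι RMax} {l : RMax} {C : MultiCircuit ι} {x y : Vec ι}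
    (hx : x ∈ WAC A l C) (hy : y ∈ WAC A l C) : (fun i => x i ⊔ y i) ∈ WAC A l C := by
  have hx' : mpMulVec (mpAddM (matNotC A C) (smulM l (eC C))) x
      = mpMulVec (mpAddM (matC A C) (smulM l (eNotC C))) x := hx
  have hy' : mpMulVec (mpAddM (matNotC A C) (smulM l (eC C))) y
      = mpMulVec (mpAddM (matC A C) (smulM l (eNotC C))) y := hy
  show _ = _
  rw [mpMulVec_max, mpMulVec_max, hx', hy']

lemma mpMulVec_smul (M : Matrix ι ι RMax) (c : RMax) (x : Vec ι) :
    mpMulVec M (smulV c x) = smulV c (mpMulVec M x) := by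
  funext i
  unfold mpMulVec smulV
  rw [RMax.add_finset_sup]
  exact Finset.sup_congr rfl fun j _ => add_left_comm _ _ _

lemma WAC_smul {A : Matrix ι ι RMax} {l : RMax} {C : MultiCircuit ι} (c : RMax) {x : Vec ι}
    (hx : x ∈ WAC A l C) : smulV c x ∈ WAC A l C := by
  have hx' : mpMulVec (mpAddM (matNotC A C) (smulM l (eC C))) x
      = mpMulVec (mpAddM (matC A C) (smulM l (eNotC C))) x := hx
  show _ = _
  rw [mpMulVec_smul, mpMulVec_smul, hx']

lemma setSum_zero {κ : Type} (U : κ → Set (Vec ι)) : zeroV ι ∈ setSum U := by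
  refine ⟨∅, fun _ => zeroV ι, by simp, ?_⟩
  funext i
  simp [zeroV]

lemma sup_union_ite {κ : Type} [DecidableEq κ] (s1 s2 : Finset κ) (g : κ → RMax) :
    (s1 ∪ s2).sup (fun k => if k ∈ s1 then g k else ⊥) = s1.sup g := by
  apply le_antisymm
  · apply Finset.sup_le
    intro k _
    by_cases h : k ∈ s1
    · rw [if_pos h]
      exact Finset.le_sup h
    · rw [if_neg h]
      exact bot_le
  · apply Finset.sup_le
    intro k hk
    have : g k = if k ∈ s1 then g k else ⊥ := by rw [if_pos hk]
    rw [this]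
    exact Finset.le_sup (f := fun k => if k ∈ s1 then g k else ⊥) (Finset.mem_union_left s2 hk)

lemma setSum_max {κ : Type} [DecidableEq κ] (U : κ → Set (Vec ι))
    (hU : ∀ k, ∀ v ∈ U k, ∀ w ∈ U k, (fun i => v i ⊔ w i) ∈ U k)
    {x y : Vec ι} (hx : x ∈ setSum U) (hy : y ∈ setSum U) :
    (fun i => x i ⊔ y i) ∈ setSum U := by
  obtain ⟨s1, f1, hf1, hxe⟩ := hx
  obtain ⟨s2, f2, hf2, hye⟩ := hy
  refine ⟨s1 ∪ s2,
    fun k => fun i => (if k ∈ s1 then f1 k i else ⊥) ⊔ (if k ∈ s2 then f2 k i else ⊥),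
    ?_, ?_⟩
  · intro k hk
    by_cases h1 : k ∈ s1 <;> by_cases h2 : k ∈ s2
    · simpa [h1, h2] using hU k (f1 k) (hf1 k h1) (f2 k) (hf2 k h2)
    · simpa [h1, h2] using hf1 k h1
    · simpa [h1, h2] using hf2 k h2
    · exact absurd hk (by simp [h1, h2])
  · rw [hxe, hye]
    funext i
    rw [RMax.sup_congr_max (s1 ∪ s2) (fun k => if k ∈ s1 then f1 k i else ⊥)
        (fun k => if k ∈ s2 then f2 k i else ⊥),
      sup_union_ite s1 s2 (fun k => f1 k i), Finset.union_comm,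
      sup_union_ite s2 s1 (fun k => f2 k i)]

lemma setSum_smul {κ : Type} (U : κ → Set (Vec ι)) (c : RMax)
    (hU : ∀ k, ∀ v ∈ U k, smulV c v ∈ U k)
    {x : Vec ι} (hx : x ∈ setSum U) : smulV c x ∈ setSum U := by
  obtain ⟨s1, f1, hf1, hxe⟩ := hx
  refine ⟨s1, fun k => smulV c (f1 k), fun k hk => hU k (f1 k) (hf1 k hk), ?_⟩
  rw [hxe]
  funext i
  show c + s1.sup (fun k => f1 k i) = _
  rw [RMax.add_finset_sup]
  rfl

end AuxSubspace

section AuxLimits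

open Filter

lemma RMaxTendsto_bot : RMaxTendsto (fun _ => (⊥ : RMax)) ⊥ := by
  constructor
  · intro _ M
    exact Eventually.of_forall fun δ => WithBot.bot_lt_coe M
  · intro x hx
    exact absurd hx (by simp)

lemma RMaxTendsto_congr {f g : ℝ → RMax} {a : RMax}
    (h : ∀ᶠ δ in nhdsWithin 0 (Set.Ioi (0:ℝ)), f δ = g δ)
    (hf : RMaxTendsto f a) : RMaxTendsto g a := by
  constructor
  · intro hb M
    exact ((hf.1 hb M).and h).mono fun δ hδ => hδ.2 ▸ hδ.1
  · intro x hx ε hε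
    exact ((hf.2 x hx ε hε).and h).mono fun δ hδ => by
      obtain ⟨⟨y, h1, h2⟩, h3⟩ := hδ
      exact ⟨y, h3 ▸ h1, h2⟩

lemma RMaxTendsto_max {f g : ℝ → RMax} {a b : RMax}
    (hf : RMaxTendsto f a) (hg : RMaxTendsto g b) :
    RMaxTendsto (fun δ => f δ ⊔ g δ) (a ⊔ b) := by
  induction a using WithBot.recBotCoe with
  | bot =>
      induction b using WithBot.recBotCoe with
      | bot =>
          rw [show ((⊥ : RMax) ⊔ ⊥) = ⊥ from sup_idem _]
          constructor
          · intro _ M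
            exact ((hf.1 rfl M).and (hg.1 rfl M)).mono fun δ hδ => max_lt hδ.1 hδ.2
          · intro x hx
            exact absurd hx (by simp)
      | coe rb =>
          rw [show ((⊥ : RMax) ⊔ (rb : ℝ)) = ((rb : ℝ) : RMax) from bot_sup_eq _]
          constructor
          · intro hbot
            exact absurd hbot (by simp)
          · intro x hx ε hε
            have hx' : rb = x := by exact_mod_cast hx
            subst hx'
            refine ((hg.2 rb rfl ε hε).and (hf.1 rfl (rb - ε))).mono fun δ hδ => ?_
            obtain ⟨⟨y, hgy, hyd⟩, hfd⟩ := hδ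
            refine ⟨y, ?_, hyd⟩
            have hle : f δ ≤ (y : RMax) := by
              apply le_of_lt
              refine lt_of_lt_of_le hfd (WithBot.coe_le_coe.2 ?_)
              have := abs_lt.mp hyd
              linarith
            show f δ ⊔ g δ = (y : RMax)
            rw [hgy]
            exact max_eq_right hle
  | coe ra =>
      induction b using WithBot.recBotCoe with
      | bot =>
          rw [show (((ra : ℝ) : RMax) ⊔ ⊥) = ((ra : ℝ) : RMax) from sup_bot_eq _]
          constructor
          · intro hbot
            exact absurd hbot (by simp)
          · intro x hx ε hε
            have hx' : ra = x := by exact_mod_cast hx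
            subst hx'
            refine ((hf.2 ra rfl ε hε).and (hg.1 rfl (ra - ε))).mono fun δ hδ => ?_
            obtain ⟨⟨y, hfy, hyd⟩, hgd⟩ := hδ
            refine ⟨y, ?_, hyd⟩
            have hle : g δ ≤ (y : RMax) := by
              apply le_of_lt
              refine lt_of_lt_of_le hgd (WithBot.coe_le_coe.2 ?_)
              have := abs_lt.mp hyd
              linarith
            show f δ ⊔ g δ = (y : RMax)
            rw [hfy]
            exact max_eq_left hle
      | coe rb =>
          rw [show (((ra : ℝ) : RMax) ⊔ ((rb : ℝ) : RMax)) = ((max ra rb : ℝ) : RMax) by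
            exact_mod_cast rfl]
          constructor
          · intro hbot
            exact absurd hbot (by simp)
          · intro x hx ε hε
            have hx' : max ra rb = x := by exact_mod_cast hx
            subst hx'
            refine ((hf.2 ra rfl ε hε).and (hg.2 rb rfl ε hε)).mono fun δ hδ => ?_
            obtain ⟨⟨y1, hfy, hy1⟩, ⟨y2, hgy, hy2⟩⟩ := hδ
            refine ⟨max y1 y2, ?_, ?_⟩
            · show f δ ⊔ g δ = ((max y1 y2 : ℝ) : RMax)
              rw [hfy, hgy]
              exact_mod_cast rfl
            · exact lt_of_le_of_lt (abs_max_sub_max_le_max y1 y2 ra rb) (max_lt hy1 hy2)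

lemma RMaxTendsto_smul (c : ℝ) {f : ℝ → RMax} {a : RMax} (hf : RMaxTendsto f a) :
    RMaxTendsto (fun δ => (c : RMax) + f δ) ((c : RMax) + a) := by
  induction a using WithBot.recBotCoe with
  | bot =>
      rw [show ((c : RMax) + ⊥) = ⊥ from WithBot.add_bot _]
      constructor
      · intro _ M
        refine (hf.1 rfl (M - c)).mono fun δ hδ => ?_
        show (c : RMax) + f δ < (M : RMax)
        refine lt_of_lt_of_le (WithBot.add_lt_add_left (by simp) hδ) ?_
        rw [← WithBot.coe_add]
        exact WithBot.coe_le_coe.2 (by linarith)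
      · intro x hx
        exact absurd hx (by simp)
  | coe ra =>
      rw [show ((c : RMax) + ((ra : ℝ) : RMax)) = ((c + ra : ℝ) : RMax) from
        (WithBot.coe_add c ra).symm]
      constructor
      · intro hbot
        exact absurd hbot (by simp)
      · intro x hx ε hε
        have hx' : c + ra = x := by exact_mod_cast hx
        subst hx'
        refine (hf.2 ra rfl ε hε).mono fun δ hδ => ?_
        obtain ⟨y, hfy, hyd⟩ := hδ
        refine ⟨c + y, ?_, ?_⟩
        · show (c : RMax) + f δ = ((c + y : ℝ) : RMax)
          rw [hfy, ← WithBot.coe_add]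
        · have heq : c + y - (c + ra) = y - ra := by ring
          rw [heq]
          exact hyd

end AuxLimits

/-! ## Statement 3 -/
lemma mem_algEigenspace_iff {ι : Type} [Fintype ι] [DecidableEq ι]
    (A : Matrix ι ι RMax) (l : RMax) (x : Vec ι) :
    x ∈ algEigenspace A l ↔ ∀ ζ ∈ Zset A,
      x ∈ setLim fun δ => perturbSum (perturb A ζ δ) (mpBall l (Fintype.card ι * δ)) := by
  unfold algEigenspace
  exact Set.mem_iInter₂

theorem algEigenspace_is_subspace {n : ℕ} (A : Matrix (Fin n) (Fin n) RMax) (l : RMax) :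
    zeroV (Fin n) ∈ algEigenspace A l ∧
    (∀ x y : Vec (Fin n), x ∈ algEigenspace A l → y ∈ algEigenspace A l →
      (fun i => max (x i) (y i)) ∈ algEigenspace A l) ∧
    (∀ c : RMax, ∀ x ∈ algEigenspace A l, smulV c x ∈ algEigenspace A l) := by
  classical
  have hzero : zeroV (Fin n) ∈ algEigenspace A l := by
    rw [mem_algEigenspace_iff]
    intro ζ hζ
    exact ⟨fun _ => zeroV (Fin n), fun δ _ => setSum_zero _, fun i => RMaxTendsto_bot⟩
  refine ⟨hzero, ?_, ?_⟩
  · intro x y hx hy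
    rw [mem_algEigenspace_iff] at hx hy ⊢
    intro ζ hζ
    obtain ⟨gx, hgx, hcx⟩ := hx ζ hζ
    obtain ⟨gy, hgy, hcy⟩ := hy ζ hζ
    obtain ⟨hζ01, δ', hδ'pos, hδ'star⟩ := hζ
    refine ⟨fun δ => if δ < δ' then (fun i => gx δ i ⊔ gy δ i) else zeroV (Fin n), ?_, ?_⟩
    · intro δ hδpos
      dsimp only
      by_cases h : δ < δ'
      · rw [if_pos h]
        apply setSum_max
        · intro k v hv w hw
          obtain ⟨Cv, hCv, hvW⟩ := hv
          obtain ⟨Cw, hCw, hwW⟩ := hw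
          exact ⟨Cv, hCv, WAC_max hvW
            (WAC_merge _ _ (fun _ => hδ'star δ hδpos h) Cv Cw hCv hCw hwW)⟩
        · exact hgx δ hδpos
        · exact hgy δ hδpos
      · rw [if_neg h]
        exact setSum_zero _
    · intro i
      refine RMaxTendsto_congr ?_ (RMaxTendsto_max (hcx i) (hcy i))
      refine Filter.eventually_of_mem (Ioo_mem_nhdsGT_of_mem ⟨le_refl (0:ℝ), hδ'pos⟩) ?_
      intro δ hδ
      dsimp only
      rw [if_pos hδ.2]
  · intro c x hx
    induction c using WithBot.recBotCoe with
    | bot =>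
        have hsb : smulV ⊥ x = zeroV (Fin n) := by
          funext i
          exact WithBot.bot_add (x i)
        rw [hsb]
        exact hzero
    | coe rc =>
        rw [mem_algEigenspace_iff] at hx ⊢
        intro ζ hζ
        obtain ⟨gx, hgx, hcx⟩ := hx ζ hζ
        refine ⟨fun δ => smulV (↑rc) (gx δ), ?_, ?_⟩
        · intro δ hδpos
          apply setSum_smul
          · intro k v hv
            obtain ⟨Cv, hCv, hvW⟩ := hv
            exact ⟨Cv, hCv, WAC_smul _ hvW⟩
          · exact hgx δ hδpos
        · intro i
          exact RMaxTendsto_smul rc (hcx i)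
end

section
/- Let P = (p_{ij}) ∈ ℝ_max^{n×n} be a generalized permutation matrix, i.e., there exists a permutation σ ∈ S_n such that p_{ij} ≠ ε if and only if j = σ(i). Then for every Q ∈ ℝ_max^{n×n} and every index i, the i-th column of adj(P ⊗ Q) equals the σ(i)-th column of adj(Q) multiplied (in the max-plus sense) by ⊗_{k≠i} p_{kσ(k)}. In particular, adj(Q) and adj(P ⊗ Q) are equivalent up to permutation and scaling of columns. -/
open Filter

section Aux

lemma add_sup_eq {α : Type} (s : Finset α) (f : α → RMax) (c : RMax) :
    c + s.sup f = s.sup fun a => c + f a := by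
  refine Finset.comp_sup_eq_sup_comp (fun x => c + x) (fun x y => ?_) (by simp)
  exact (max_add_add_left c x y).symm

lemma mpDet_row_add {n : ℕ} (c : Fin n → RMax) (M : Matrix (Fin n) (Fin n) RMax) :
    mpDet (fun a b => c a + M a b) = (∑ a, c a) + mpDet M := by
  unfold mpDet
  rw [add_sup_eq]
  refine Finset.sup_congr rfl fun π _ => ?_
  show ∑ a, (c a + M a (π a)) = (∑ a, c a) + ∑ a, M a (π a)
  exact Finset.sum_add_distrib

lemma mpDet_row_reindex {n : ℕ} (M : Matrix (Fin n) (Fin n) RMax) (τ : Equiv.Perm (Fin n)) :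
    mpDet (fun a b => M (τ a) b) = mpDet M := by
  unfold mpDet
  apply le_antisymm <;> apply Finset.sup_le <;> intro π _
  · have h : ∑ a, M (τ a) (π a) = ∑ a, M a ((π * τ⁻¹ : Equiv.Perm (Fin n)) a) := by
      rw [← Equiv.sum_comp τ (fun a => M a ((π * τ⁻¹ : Equiv.Perm (Fin n)) a))]
      simp [Equiv.Perm.mul_apply]
    refine le_trans (le_of_eq h) ?_
    exact Finset.le_sup (f := fun π' : Equiv.Perm (Fin n) => ∑ a, M a (π' a))
      (Finset.mem_univ (π * τ⁻¹))
  · have h : ∑ a, M a (π a) = ∑ a, M (τ a) ((π * τ : Equiv.Perm (Fin n)) a) := by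
      rw [← Equiv.sum_comp τ (fun a => M a (π a))]
      simp [Equiv.Perm.mul_apply]
    refine le_trans (le_of_eq h) ?_
    exact Finset.le_sup (f := fun π' : Equiv.Perm (Fin n) => ∑ a, M (τ a) (π' a))
      (Finset.mem_univ (π * τ))

lemma mpMul_genPerm_entry {n : ℕ} (P : Matrix (Fin (n + 1)) (Fin (n + 1)) RMax)
    (σ : Equiv.Perm (Fin (n + 1))) (hP : ∀ i j, P i j ≠ ⊥ ↔ j = σ i)
    (Q : Matrix (Fin (n + 1)) (Fin (n + 1)) RMax) (k j : Fin (n + 1)) :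
    mpMul P Q k j = P k (σ k) + Q (σ k) j := by
  unfold mpMul
  apply le_antisymm
  · apply Finset.sup_le; intro m _
    by_cases h : m = σ k
    · subst h; exact le_rfl
    · have hb : P k m = ⊥ := by
        by_contra hb; exact h ((hP k m).mp hb)
      simp [hb]
  · exact Finset.le_sup (f := fun m => P k m + Q m j) (Finset.mem_univ (σ k))

end Aux

/-! ## Statement 8 -/
theorem adj_mul_genPerm {n : ℕ} (P : Matrix (Fin (n + 1)) (Fin (n + 1)) RMax)
    (σ : Equiv.Perm (Fin (n + 1))) (hP : ∀ i j, P i j ≠ ⊥ ↔ j = σ i)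
    (Q : Matrix (Fin (n + 1)) (Fin (n + 1)) RMax) :
    ∀ i r : Fin (n + 1),
      mpAdj (mpMul P Q) r i = (∑ k ∈ Finset.univ.erase i, P k (σ k)) + mpAdj Q r (σ i) := by
  classical
  intro i r
  have key : ∀ a : Fin n, σ (i.succAbove a) ≠ σ i := fun a h =>
    Fin.succAbove_ne i a (σ.injective h)
  choose f hf using fun a => Fin.exists_succAbove_eq (key a)
  have hinj : Function.Injective f := by
    intro a b hab
    have h1 := hf a
    rw [hab, hf b] at h1
    exact (Fin.succAbove_right_injective (σ.injective h1)).symm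
  let τ : Equiv.Perm (Fin n) := Equiv.ofBijective f (Finite.injective_iff_bijective.mp hinj)
  have hτ : ∀ a, (τ : Fin n → Fin n) a = f a := fun a => rfl
  show mpDet (mpMinor (mpMul P Q) i r) = _ + mpDet (mpMinor Q (σ i) r)
  have hmin : mpMinor (mpMul P Q) i r = fun a b =>
      (fun a => P (i.succAbove a) (σ (i.succAbove a))) a +
      (fun a b => mpMinor Q (σ i) r (τ a) b) a b := by
    funext a b
    simp only [mpMinor, mpMul_genPerm_entry P σ hP Q, hτ, hf]
  rw [hmin, mpDet_row_add (fun a => P (i.succAbove a) (σ (i.succAbove a)))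
    (fun a b => mpMinor Q (σ i) r (τ a) b), mpDet_row_reindex (mpMinor Q (σ i) r) τ]
  congr 1
  refine Finset.sum_bij (s := (Finset.univ : Finset (Fin n)))
    (t := Finset.univ.erase i)
    (f := fun a => P (i.succAbove a) (σ (i.succAbove a)))
    (g := fun k => P k (σ k)) (fun a _ => i.succAbove a) ?_ ?_ ?_ ?_
  · intro a _
    exact Finset.mem_erase.mpr ⟨Fin.succAbove_ne i a, Finset.mem_univ _⟩
  · intro a _ b _ hab
    exact Fin.succAbove_right_injective hab
  · intro x hx
    obtain ⟨a, ha⟩ := Fin.exists_succAbove_eq (Finset.mem_erase.mp hx).1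
    exact ⟨a, Finset.mem_univ a, ha⟩
  · intro a _; rfl
end

section
/- Let P ∈ ℝ_max^{n×n} be a matrix whose maximum eigenvalue is 0 (equivalently, the maximum average weight of circuits in G(P) is 0), and let p_i denote the i-th column of P*. If the vertex i lies on a critical circuit of G(P), then p_i is the minimal element, with respect to the entrywise order on ℝ_max^n, of the set U^{(i)} = { (−v_i) ⊗ v : v ∈ U(P,0), v_i ≠ ε }, where U(P,0) = { v ∈ ℝ_max^n : P ⊗ v = v }. -/
open Filter

noncomputable section Aux

namespace SCM

variable {n : ℕ}

abbrev RM := WithBot ℝ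

/-- weight of walk starting at `a` through successive vertices `l` -/
def wW (P : Matrix (Fin n) (Fin n) RM) : Fin n → List (Fin n) → RM
  | _, [] => 0
  | a, b :: l => P a b + wW P b l

def lastV : Fin n → List (Fin n) → Fin n
  | a, [] => a
  | _, b :: l => lastV b l

variable (P : Matrix (Fin n) (Fin n) RM)

@[simp] lemma wW_nil (a : Fin n) : wW P a [] = 0 := rfl
@[simp] lemma wW_cons (a b : Fin n) (l) : wW P a (b :: l) = P a b + wW P b l := rfl
@[simp] lemma lastV_nil (a : Fin n) : lastV a [] = a := rfl
@[simp] lemma lastV_cons (a b : Fin n) (l) : lastV a (b :: l) = lastV b l := rfl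

lemma lastV_append (l₁ l₂ : List (Fin n)) (a : Fin n) :
    lastV a (l₁ ++ l₂) = lastV (lastV a l₁) l₂ := by
  induction l₁ generalizing a with
  | nil => simp
  | cons b l ih => simp [ih]

@[simp] lemma lastV_concat (l : List (Fin n)) (a x : Fin n) :
    lastV a (l ++ [x]) = x := by
  rw [lastV_append]; rfl

lemma lastV_mem (l : List (Fin n)) (a : Fin n) : lastV a l ∈ a :: l := by
  induction l generalizing a with
  | nil => simp
  | cons b l ih => simpa using List.mem_cons_of_mem _ (ih b)

lemma lastV_eq_getLast (l : List (Fin n)) (a : Fin n) :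
    lastV a l = (a :: l).getLast (List.cons_ne_nil _ _) := by
  induction l generalizing a with
  | nil => simp
  | cons b l ih => rw [lastV_cons, ih b, List.getLast_cons (List.cons_ne_nil _ _)]

lemma wW_append (l₁ l₂ : List (Fin n)) (a : Fin n) :
    wW P a (l₁ ++ l₂) = wW P a l₁ + wW P (lastV a l₁) l₂ := by
  induction l₁ generalizing a with
  | nil => simp
  | cons b l ih => simp [ih, add_assoc]

lemma wW_le_pow (l : List (Fin n)) (a : Fin n) :
    wW P a l ≤ mpPow P l.length a (lastV a l) := by
  induction l generalizing a with
  | nil => simp [mpPow, mpId]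
  | cons b l ih =>
      calc wW P a (b :: l) = P a b + wW P b l := rfl
      _ ≤ P a b + mpPow P l.length b (lastV b l) := add_le_add_right (ih b) _
      _ ≤ mpPow P (b :: l).length a (lastV a (b :: l)) := by
          simpa [mpPow, mpMul] using Finset.le_sup (f := fun j => P a j + mpPow P l.length j (lastV b l)) (Finset.mem_univ b)

lemma sup_add {κ : Type*} (s : Finset κ) (f : κ → RM) (c : RM) :
    s.sup f + c = s.sup fun k => f k + c := by
  refine Finset.comp_sup_eq_sup_comp (· + c) (fun x y => ?_) (by simp)
  exact (monotone_id.add_const c).map_max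

lemma add_sup {κ : Type*} (s : Finset κ) (f : κ → RM) (c : RM) :
    c + s.sup f = s.sup fun k => c + f k := by
  refine Finset.comp_sup_eq_sup_comp (c + ·) (fun x y => ?_) (by simp)
  exact (monotone_id.const_add c).map_max


lemma wW_formPerm : ∀ (l : List (Fin n)) (a z : Fin n), (a :: l).Nodup →
    wW P a (l ++ [z]) =
      ∑ v ∈ (a :: l).toFinset, P v (if v = lastV a l then z else (a :: l).formPerm v) := by
  intro l
  induction l with
  | nil =>
      intro a z _
      simp [wW]
  | cons b l ih =>
      intro a z hnd
      have hnd' : (b :: l).Nodup := hnd.of_cons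
      have ha : a ∉ b :: l := by
        intro h; exact (List.nodup_cons.mp hnd).1 h
      have hlast_mem : lastV b l ∈ b :: l := lastV_mem l b
      have h1 : wW P a ((b :: l) ++ [z]) = P a b + wW P b (l ++ [z]) := rfl
      rw [h1, ih b z hnd']
      have htf : (a :: b :: l).toFinset = insert a (b :: l).toFinset := by
        simp [List.toFinset_cons]
      rw [htf, Finset.sum_insert (by simpa using ha)]
      congr 1
      · -- P a b = P a (if a = lastV a (b::l) then z else formPerm (a::b::l) a)
        have hne : a ≠ lastV b l := fun h => ha (h ▸ hlast_mem)
        have : (a :: b :: l).formPerm a = b := List.formPerm_apply_head a b l hnd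
        rw [lastV_cons, if_neg hne, this]
      · apply Finset.sum_congr rfl
        intro v hv
        have hv' : v ∈ b :: l := by simpa using hv
        by_cases hvl : v = lastV b l
        · simp [hvl]
        · have hτ : (b :: l).formPerm v ∈ b :: l := List.formPerm_apply_mem_of_mem hv'
          have hτa : (b :: l).formPerm v ≠ a := fun h => ha (h ▸ hτ)
          have hτb : (b :: l).formPerm v ≠ b := by
            intro h
            apply hvl
            rw [lastV_eq_getLast]
            exact (List.formPerm_eq_head_iff_eq_getLast l v b).mp h
          have : (a :: b :: l).formPerm v = (b :: l).formPerm v := by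
            rw [List.formPerm_cons_cons, Equiv.Perm.mul_apply,
              Equiv.swap_apply_of_ne_of_ne hτa hτb]
          rw [lastV_cons, if_neg hvl, this, if_neg hvl]

lemma sublist_pair {x : Fin n} : ∀ {l : List (Fin n)}, List.Sublist [x, x] l →
    ∃ l₁ l₂ l₃, l = l₁ ++ x :: l₂ ++ x :: l₃ := by
  intro l h
  induction l with
  | nil => simp at h
  | cons b l ih =>
      rcases h with _ | ⟨h', _⟩ | h'
      case cons h' =>
        obtain ⟨l₁, l₂, l₃, rfl⟩ := ih h'
        exact ⟨b :: l₁, l₂, l₃, rfl⟩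
      case cons_cons h' =>
        have hx : x ∈ l := h'.subset (by simp)
        obtain ⟨s, t, rfl⟩ := List.append_of_mem hx
        exact ⟨[], s, t, rfl⟩

lemma not_nodup_decomp {l : List (Fin n)} (h : ¬ l.Nodup) :
    ∃ x l₁ l₂ l₃, l = l₁ ++ x :: l₂ ++ x :: l₃ := by
  obtain ⟨x, hx⟩ := List.exists_duplicate_iff_not_nodup.mpr h
  obtain ⟨l₁, l₂, l₃, rfl⟩ := sublist_pair (List.duplicate_iff_sublist.mp hx)
  exact ⟨x, l₁, l₂, l₃, rfl⟩

/-- Any closed walk has weight ≤ 0, given that all elementary circuits have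
nonpositive weight. -/
lemma closed_le_zero
    (hcirc : ∀ D : MultiCircuit (Fin n), IsCircuit D → InGraph P D → mcWeight P D ≤ 0) :
    ∀ m : ℕ, ∀ (a : Fin n) (l : List (Fin n)), l.length ≤ m → wW P a (l ++ [a]) ≤ 0 := by
  intro m
  induction m using Nat.strong_induction_on with
  | _ m IH =>
  intro a l hlen
  by_cases hnd : (a :: l).Nodup
  · -- elementary circuit case
    have hlast : (a :: l).formPerm (lastV a l) = a := by
      rw [lastV_eq_getLast]; exact List.formPerm_apply_getLast a l
    have hW : wW P a (l ++ [a]) =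
        ∑ v ∈ (a :: l).toFinset, P v ((a :: l).formPerm v) := by
      rw [wW_formPerm P l a a hnd]
      refine Finset.sum_congr rfl fun v _ => ?_
      by_cases hv : v = lastV a l
      · rw [if_pos hv, hv, hlast]
      · rw [if_neg hv]
    by_cases hbot : wW P a (l ++ [a]) = ⊥
    · rw [hbot]; exact bot_le
    · set D : MultiCircuit (Fin n) :=
        ⟨(a :: l).toFinset, (a :: l).formPerm,
          fun v hv => List.formPerm_apply_of_notMem (by simpa using hv)⟩ with hDdef
      have hmc : mcWeight P D = wW P a (l ++ [a]) := by
        rw [hW]; rfl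
      have hInG : InGraph P D := by
        intro v hv
        intro hPv
        apply hbot
        rw [hW, ← Finset.add_sum_erase _ _ hv]
        simp only [hDdef] at hPv ⊢
        rw [hPv, WithBot.bot_add]
      have hCirc : IsCircuit D := by
        constructor
        · exact ⟨a, by simp [hDdef]⟩
        · intro v hv w hw
          rcases l with _ | ⟨b, l'⟩
          · -- singleton
            simp only [hDdef, List.toFinset_cons, List.toFinset_nil] at hv hw
            have hv' : v = a := by simpa using hv
            have hw' : w = a := by simpa using hw
            rw [hv', hw']
          · have hcyc := List.isCycle_formPerm hnd (by simp)
            have hv' : v ∈ a :: b :: l' := by simpa [hDdef] using hv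
            have hw' : w ∈ a :: b :: l' := by simpa [hDdef] using hw
            exact hcyc.sameCycle
              ((List.formPerm_apply_mem_ne_self_iff _ hnd v hv').mpr (by simp))
              ((List.formPerm_apply_mem_ne_self_iff _ hnd w hw').mpr (by simp))
      have := hcirc D hCirc hInG
      rw [hmc] at this
      exact this
  · -- splice out a repeated vertex
    obtain ⟨x, l₁, l₂, l₃, hdec⟩ := not_nodup_decomp hnd
    rcases l₁ with _ | ⟨b, l₁'⟩
    · -- a = x, l = l₂ ++ x :: l₃
      simp only [List.nil_append] at hdec
      obtain ⟨h1, h2⟩ := List.cons_eq_cons.mp hdec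
      simp only [List.append_eq] at h2
      subst h1
      rw [h2] at hlen ⊢
      have hsplit : (l₂ ++ a :: l₃) ++ [a] = (l₂ ++ [a]) ++ (l₃ ++ [a]) := by simp
      rw [hsplit, wW_append, lastV_concat]
      have hlen2 : (l₂ ++ a :: l₃).length ≤ m := hlen
      simp only [List.length_append, List.length_cons] at hlen2
      exact add_nonpos (IH l₂.length (by omega) a l₂ le_rfl)
        (IH l₃.length (by omega) a l₃ le_rfl)
    · -- a = b, l = l₁' ++ x :: l₂ ++ x :: l₃
      obtain ⟨h1, h2⟩ := List.cons_eq_cons.mp hdec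
      simp only [List.append_eq] at h2
      subst h1
      rw [h2] at hlen ⊢
      have hsplit : ((l₁' ++ x :: l₂ ++ x :: l₃) ++ [a])
          = (l₁' ++ [x]) ++ ((l₂ ++ [x]) ++ (l₃ ++ [a])) := by simp
      rw [hsplit, wW_append, lastV_concat, wW_append P (l₂ ++ [x]) (l₃ ++ [a]) x,
        lastV_concat]
      have hlen2 : (l₁' ++ x :: l₂ ++ x :: l₃).length ≤ m := hlen
      simp only [List.length_append, List.length_cons] at hlen2
      have h2 : wW P x (l₂ ++ [x]) ≤ 0 := IH l₂.length (by omega) x l₂ le_rfl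
      have hrec : wW P a (l₁' ++ [x]) + wW P x (l₃ ++ [a])
          = wW P a ((l₁' ++ x :: l₃) ++ [a]) := by
        have : (l₁' ++ x :: l₃) ++ [a] = (l₁' ++ [x]) ++ (l₃ ++ [a]) := by simp
        rw [this, wW_append P (l₁' ++ [x]) (l₃ ++ [a]) a, lastV_concat]
      calc wW P a (l₁' ++ [x]) + (wW P x (l₂ ++ [x]) + wW P x (l₃ ++ [a]))
          ≤ wW P a (l₁' ++ [x]) + (0 + wW P x (l₃ ++ [a])) := by
            exact add_le_add_right (add_le_add_left h2 _) _
        _ = wW P a ((l₁' ++ x :: l₃) ++ [a]) := by rw [zero_add, hrec]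
        _ ≤ 0 := IH (l₁'.length + 1 + l₃.length) (by omega) a (l₁' ++ x :: l₃)
            (by simp; omega)

lemma pow_attained : ∀ (m : ℕ) (a s : Fin n), mpPow P m a s = ⊥ ∨
    ∃ l : List (Fin n), l.length = m ∧ lastV a l = s ∧ wW P a l = mpPow P m a s := by
  intro m
  induction m with
  | zero =>
      intro a s
      by_cases h : a = s
      · subst h
        exact Or.inr ⟨[], rfl, rfl, by simp [mpPow, mpId]⟩
      · left; simp [mpPow, mpId, h]
  | succ m ih =>
      intro a s
      have hne : (Finset.univ : Finset (Fin n)).Nonempty := ⟨a, Finset.mem_univ a⟩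
      obtain ⟨j, _, hj⟩ := Finset.exists_mem_eq_sup Finset.univ hne
        (fun j => P a j + mpPow P m j s)
      have hpow : mpPow P (m + 1) a s = P a j + mpPow P m j s := hj
      rcases ih j s with hb | ⟨l, hl, hlast, hw⟩
      · left; rw [hpow, hb, WithBot.add_bot]
      · right
        exact ⟨j :: l, by simp [hl], by simpa using hlast, by rw [wW_cons, hw, hpow]⟩

lemma walk_le_star
    (hcirc : ∀ D : MultiCircuit (Fin n), IsCircuit D → InGraph P D → mcWeight P D ≤ 0) :
    ∀ (m : ℕ) (a : Fin n) (l : List (Fin n)), l.length ≤ m →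
      wW P a l ≤ mpStar P a (lastV a l) := by
  intro m
  induction m using Nat.strong_induction_on with
  | _ m IH =>
  intro a l hlen
  by_cases hsmall : l.length < n
  · calc wW P a l ≤ mpPow P l.length a (lastV a l) := wW_le_pow P l a
      _ ≤ mpStar P a (lastV a l) := by
        apply Finset.le_sup (f := fun k => mpPow P k a (lastV a l))
        simp [hsmall]
  · -- l.length ≥ n : the walk repeats a vertex
    have hcard : ¬ (a :: l).Nodup := by
      intro hnd
      have := List.Nodup.length_le_card hnd
      simp only [List.length_cons, Fintype.card_fin] at this
      omega
    obtain ⟨x, l₁, l₂, l₃, hdec⟩ := not_nodup_decomp hcard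
    rcases l₁ with _ | ⟨b, l₁'⟩
    · obtain ⟨h1, h2⟩ := List.cons_eq_cons.mp hdec
      simp only [List.append_eq] at h2
      subst h1
      rw [h2] at hlen ⊢
      have hsp : l₂ ++ a :: l₃ = (l₂ ++ [a]) ++ l₃ := by simp
      rw [hsp, wW_append, lastV_concat, lastV_append, lastV_concat]
      have h2' : wW P a (l₂ ++ [a]) ≤ 0 :=
        closed_le_zero P hcirc l₂.length a l₂ le_rfl
      simp only [List.length_append, List.length_cons] at hlen
      calc wW P a (l₂ ++ [a]) + wW P a l₃ ≤ 0 + wW P a l₃ := add_le_add_left h2' _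
        _ = wW P a l₃ := zero_add _
        _ ≤ mpStar P a (lastV a l₃) := IH l₃.length (by omega) a l₃ le_rfl
    · obtain ⟨h1, h2⟩ := List.cons_eq_cons.mp hdec
      simp only [List.append_eq] at h2
      subst h1
      rw [h2] at hlen ⊢
      have hsp : l₁' ++ x :: l₂ ++ x :: l₃ = (l₁' ++ [x]) ++ ((l₂ ++ [x]) ++ l₃) := by simp
      rw [hsp, wW_append, lastV_concat, wW_append P (l₂ ++ [x]) l₃ x, lastV_concat]
      have h2' : wW P x (l₂ ++ [x]) ≤ 0 :=
        closed_le_zero P hcirc l₂.length x l₂ le_rfl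
      simp only [List.length_append, List.length_cons] at hlen
      have hrec : wW P a (l₁' ++ [x]) + wW P x l₃ = wW P a (l₁' ++ x :: l₃) := by
        have hsp2 : l₁' ++ x :: l₃ = (l₁' ++ [x]) ++ l₃ := by simp
        rw [hsp2, wW_append P (l₁' ++ [x]) l₃ a, lastV_concat]
      have hlast : lastV a (l₁' ++ x :: l₃) = lastV x l₃ := by
        have hsp2 : l₁' ++ x :: l₃ = (l₁' ++ [x]) ++ l₃ := by simp
        rw [hsp2, lastV_append, lastV_concat]
      calc wW P a (l₁' ++ [x]) + (wW P x (l₂ ++ [x]) + wW P x l₃)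
          ≤ wW P a (l₁' ++ [x]) + (0 + wW P x l₃) :=
            add_le_add_right (add_le_add_left h2' _) _
        _ = wW P a (l₁' ++ x :: l₃) := by rw [zero_add, hrec]
        _ ≤ mpStar P a (lastV a (l₁' ++ x :: l₃)) :=
            IH (l₁'.length + 1 + l₃.length) (by omega) a (l₁' ++ x :: l₃) (by simp; omega)
        _ = mpStar P a (lastV x l₃) := by rw [hlast]
        _ = mpStar P a (lastV a (l₁' ++ [x] ++ (l₂ ++ [x] ++ l₃))) := by
            rw [lastV_append, lastV_concat, lastV_append, lastV_concat]

lemma pow_le_star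
    (hcirc : ∀ D : MultiCircuit (Fin n), IsCircuit D → InGraph P D → mcWeight P D ≤ 0)
    (m : ℕ) (a s : Fin n) : mpPow P m a s ≤ mpStar P a s := by
  rcases pow_attained P m a s with h | ⟨l, hl, hlast, hw⟩
  · rw [h]; exact bot_le
  · rw [← hw, ← hlast]
    exact walk_le_star P hcirc l.length a l le_rfl

lemma star_diag
    (hcirc : ∀ D : MultiCircuit (Fin n), IsCircuit D → InGraph P D → mcWeight P D ≤ 0)
    (i : Fin n) : mpStar P i i = 0 := by
  apply le_antisymm
  · apply Finset.sup_le
    intro k _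
    rcases Nat.eq_zero_or_pos k with rfl | hk
    · simp [mpPow, mpId]
    · rcases pow_attained P k i i with h | ⟨l, hl, hlast, hw⟩
      · rw [h]; exact bot_le
      · rw [← hw]
        rcases List.eq_nil_or_concat l with rfl | ⟨l', y, rfl⟩
        · simp at hl; omega
        · rw [List.concat_eq_append] at hlast ⊢
          have hyi : y = i := by simpa using hlast
          rw [hyi]
          exact closed_le_zero P hcirc l'.length i l' le_rfl
  · have h0 : mpPow P 0 i i = 0 := by simp [mpPow, mpId]
    rw [← h0]
    apply Finset.le_sup (f := fun k => mpPow P k i i)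
    have : 0 < n := i.pos
    simp [this]

lemma wW_ofFn (g : ℕ → Fin n) : ∀ m : ℕ,
    wW P (g 0) (List.ofFn fun k : Fin m => g (k.1 + 1))
      = ∑ k ∈ Finset.range m, P (g k) (g (k + 1)) := by
  intro m
  induction m generalizing g with
  | zero => simp
  | succ m ih =>
      have hih := ih (fun t => g (t + 1))
      rw [List.ofFn_succ, wW_cons, Finset.sum_range_succ']
      simp only [Fin.val_zero, Fin.val_succ, zero_add] at hih ⊢
      rw [hih]
      exact add_comm _ _

lemma lastV_ofFn (a : Fin n) (m : ℕ) (f : Fin (m + 1) → Fin n) :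
    lastV a (List.ofFn f) = f (Fin.last m) := by
  rw [List.ofFn_succ', List.concat_eq_append, lastV_concat]

lemma crit_walk (hP : IsMaxCycleMean P (0 : RMax)) (i : Fin n)
    (hi : ∃ D : MultiCircuit (Fin n), IsCritical P D ∧ i ∈ D.verts) :
    ∃ d : ℕ, 1 ≤ d ∧ d ≤ n ∧ (0 : RMax) ≤ mpPow P d i i := by
  obtain ⟨D, hD, hiD⟩ := hi
  obtain ⟨D₀, hc₀, hg₀, hw₀⟩ : ∃ D₀, IsCircuit D₀ ∧ InGraph P D₀ ∧
      mcWeight P D₀ = D₀.verts.card • (0 : RMax) := by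
    rcases hP.2 with h | ⟨h, _⟩
    · exact h
    · exact absurd h (by simp [WithBot.bot_ne_zero])
  rw [nsmul_zero] at hw₀
  have hcard₀ : 1 ≤ D₀.verts.card := Finset.card_pos.mpr hc₀.1
  have hle := hD.2.2 D₀ hc₀ hg₀
  rw [hw₀, nsmul_zero] at hle
  have hwle : mcWeight P D ≤ 0 := by
    have := hP.1 D hD.1 hD.2.1
    rwa [nsmul_zero] at this
  have hw : (0 : RMax) ≤ mcWeight P D := by
    refine le_trans hle ?_
    obtain ⟨c, hc⟩ : ∃ c, D₀.verts.card = c + 1 := ⟨D₀.verts.card - 1, by omega⟩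
    rw [hc, succ_nsmul]
    calc c • mcWeight P D + mcWeight P D ≤ c • (0 : RMax) + mcWeight P D :=
          add_le_add_left (nsmul_le_nsmul_right hwle c) _
      _ = mcWeight P D := by rw [nsmul_zero, zero_add]
  set σ := D.perm with hσ
  have hexp : ∃ k, 0 < k ∧ (σ ^ k) i = i :=
    ⟨orderOf σ, orderOf_pos σ, by rw [pow_orderOf_eq_one]; rfl⟩
  have hdpos : 0 < Nat.find hexp := (Nat.find_spec hexp).1
  obtain ⟨d, hd⟩ : ∃ d, Nat.find hexp = d + 1 := ⟨Nat.find hexp - 1, by omega⟩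
  have hdfix : (σ ^ (d + 1)) i = i := by
    have := (Nat.find_spec hexp).2; rwa [hd] at this
  have hdmin : ∀ k, 0 < k → k < d + 1 → (σ ^ k) i ≠ i := by
    intro k hk hkd h
    exact Nat.find_min hexp (by omega : k < Nat.find hexp) ⟨hk, h⟩
  have hmapsto : ∀ v ∈ D.verts, σ v ∈ D.verts := by
    intro v hv
    by_contra h
    have h2 := D.fixes (σ v) h
    have h3 : σ v = v := σ.injective h2
    rw [h3] at h; exact h hv
  have horb : ∀ k : ℕ, (σ ^ k) i ∈ D.verts := by
    intro k
    induction k with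
    | zero => simpa using hiD
    | succ k ih => rw [pow_succ', Equiv.Perm.mul_apply]; exact hmapsto _ ih
  have hper : ∀ q : ℕ, (σ ^ ((d + 1) * q)) i = i := by
    intro q
    induction q with
    | zero => simp
    | succ q ih => rw [Nat.mul_succ, pow_add, Equiv.Perm.mul_apply, hdfix, ih]
  have hmod : ∀ k : ℕ, (σ ^ k) i = (σ ^ (k % (d + 1))) i := by
    intro k
    conv_lhs => rw [← Nat.mod_add_div k (d + 1)]
    rw [pow_add, Equiv.Perm.mul_apply, hper]
  have hinj : ∀ k₁ ∈ Finset.range (d + 1), ∀ k₂ ∈ Finset.range (d + 1),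
      (σ ^ k₁) i = (σ ^ k₂) i → k₁ = k₂ := by
    have key : ∀ k₁ k₂, k₁ < k₂ → k₂ < d + 1 → (σ ^ k₁) i = (σ ^ k₂) i → False := by
      intro k₁ k₂ hlt hk₂ h
      have : (σ ^ k₁) ((σ ^ (k₂ - k₁)) i) = (σ ^ k₁) i := by
        rw [← Equiv.Perm.mul_apply, ← pow_add]
        rw [show k₁ + (k₂ - k₁) = k₂ by omega]
        exact h.symm
      have h2 : (σ ^ (k₂ - k₁)) i = i := (σ ^ k₁).injective this
      exact hdmin (k₂ - k₁) (by omega) (by omega) h2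
    intro k₁ h₁ k₂ h₂ h
    simp only [Finset.mem_range] at h₁ h₂
    rcases lt_trichotomy k₁ k₂ with hlt | heq | hgt
    · exact absurd (key k₁ k₂ hlt h₂ h) (fun x => x)
    · exact heq
    · exact absurd (key k₂ k₁ hgt h₁ h.symm) (fun x => x)
  have hsurj : ∀ v ∈ D.verts, ∃ k ∈ Finset.range (d + 1), (σ ^ k) i = v := by
    intro v hv
    obtain ⟨k, _, _, hk⟩ := Equiv.Perm.SameCycle.exists_pow_eq σ (hD.1.2 i hiD v hv)
    exact ⟨k % (d + 1), Finset.mem_range.mpr (Nat.mod_lt _ (by omega)),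
      by rw [← hmod]; exact hk⟩
  have hsum : ∑ k ∈ Finset.range (d + 1), P ((σ ^ k) i) ((σ ^ (k + 1)) i)
      = mcWeight P D := by
    apply Finset.sum_bij (fun k _ => (σ ^ k) i) (fun k _ => horb k) hinj
      (fun v hv => (hsurj v hv).imp fun k hk => ⟨hk.1, hk.2⟩)
    intro k _
    rw [pow_succ', Equiv.Perm.mul_apply]
  have hdle : d + 1 ≤ n := by
    have hcard : (Finset.range (d + 1)).card = D.verts.card :=
      Finset.card_bij (fun k _ => (σ ^ k) i) (fun k _ => horb k) hinj
        (fun v hv => (hsurj v hv).imp fun k hk => ⟨hk.1, hk.2⟩)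
    have h2 := Finset.card_le_univ D.verts
    rw [← hcard] at h2
    simpa using h2
  refine ⟨d + 1, by omega, hdle, ?_⟩
  have hwW : wW P i (List.ofFn fun k : Fin (d + 1) => (σ ^ (k.1 + 1)) i)
      = mcWeight P D := by
    have h := wW_ofFn P (fun k => (σ ^ k) i) (d + 1)
    simp only [pow_zero, Equiv.Perm.coe_one, id_eq] at h
    rw [h, hsum]
  have hlast : lastV i (List.ofFn fun k : Fin (d + 1) => (σ ^ (k.1 + 1)) i) = i := by
    rcases d with _ | d'
    · rw [lastV_ofFn]; simpa using hdfix
    · rw [lastV_ofFn]; simpa using hdfix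
  have hlen : (List.ofFn fun k : Fin (d + 1) => (σ ^ (k.1 + 1)) i).length = d + 1 := by simp
  have hle2 := wW_le_pow P (List.ofFn fun k : Fin (d + 1) => (σ ^ (k.1 + 1)) i) i
  rw [hlen, hlast, hwW] at hle2
  exact le_trans hw hle2

end SCM
end Aux

/-! ## Statement 9 -/
theorem star_column_minimal {n : ℕ} (P : Matrix (Fin n) (Fin n) RMax)
    (hP : IsMaxCycleMean P (0 : RMax)) (i : Fin n)
    (hi : ∃ D : MultiCircuit (Fin n), IsCritical P D ∧ i ∈ D.verts) :
    (fun r => mpStar P r i) ∈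
      {u : Vec (Fin n) | ∃ v : Vec (Fin n), mpMulVec P v = v ∧ v i ≠ ⊥ ∧
        u = fun r => mpNeg (v i) + v r} ∧
    ∀ u ∈ {u : Vec (Fin n) | ∃ v : Vec (Fin n), mpMulVec P v = v ∧ v i ≠ ⊥ ∧
        u = fun r => mpNeg (v i) + v r},
      ∀ r : Fin n, mpStar P r i ≤ u r := by
  classical
  have hcirc : ∀ D : MultiCircuit (Fin n), IsCircuit D → InGraph P D → mcWeight P D ≤ 0 := by
    intro D hc hg
    have := hP.1 D hc hg
    rwa [nsmul_zero] at this
  obtain ⟨d, hd1, hdn, hdpow⟩ := SCM.crit_walk P hP i hi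
  have hvii : mpStar P i i = 0 := SCM.star_diag P hcirc i
  have hpow_succ : ∀ (k : ℕ) (r s : Fin n),
      mpPow P (k + 1) r s = Finset.univ.sup fun j => P r j + mpPow P k j s :=
    fun k r s => rfl
  have hfix : mpMulVec P (fun r => mpStar P r i) = fun r => mpStar P r i := by
    funext r
    apply le_antisymm
    · show (Finset.univ.sup fun j => P r j + mpStar P j i) ≤ mpStar P r i
      apply Finset.sup_le
      intro j _
      calc P r j + mpStar P j i
          = (Finset.range (Fintype.card (Fin n))).sup fun k => P r j + mpPow P k j i :=
            SCM.add_sup _ _ _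
        _ ≤ mpStar P r i := by
            apply Finset.sup_le
            intro k _
            calc P r j + mpPow P k j i ≤ mpPow P (k + 1) r i := by
                  rw [hpow_succ]
                  exact Finset.le_sup (f := fun j => P r j + mpPow P k j i)
                    (Finset.mem_univ j)
              _ ≤ mpStar P r i := SCM.pow_le_star P hcirc (k + 1) r i
    · show mpStar P r i ≤ mpMulVec P (fun r => mpStar P r i) r
      have hgen : ∀ (r : Fin n) (k' : ℕ),
          mpPow P (k' + 1) r i ≤ mpMulVec P (fun r => mpStar P r i) r := by
        intro r k'
        rw [hpow_succ]
        apply Finset.sup_le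
        intro j _
        exact le_trans (add_le_add_right (SCM.pow_le_star P hcirc k' j i) _)
          (Finset.le_sup (f := fun j => P r j + mpStar P j i) (Finset.mem_univ j))
      apply Finset.sup_le
      intro k _
      rcases Nat.eq_zero_or_pos k with rfl | hkpos
      · by_cases hri : r = i
        · have h0 : mpPow P 0 r i = 0 := by simp [mpPow, mpId, hri]
          rw [h0, hri]
          obtain ⟨d', rfl⟩ : ∃ d', d = d' + 1 := ⟨d - 1, by omega⟩
          exact le_trans hdpow (hgen i d')
        · have h0 : mpPow P 0 r i = ⊥ := by simp [mpPow, mpId, hri]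
          rw [h0]; exact bot_le
      · obtain ⟨k', rfl⟩ : ∃ k', k = k' + 1 := ⟨k - 1, by omega⟩
        exact hgen r k'
  constructor
  · refine ⟨fun r => mpStar P r i, hfix, ?_, ?_⟩
    · show mpStar P i i ≠ ⊥
      rw [hvii]
      simp
    · funext r
      show mpStar P r i = mpNeg (mpStar P i i) + mpStar P r i
      rw [hvii]
      have hneg0 : mpNeg (0 : RMax) = 0 := by
        have : (0 : RMax) = ((0 : ℝ) : RMax) := rfl
        rw [this]
        simp [mpNeg]
      rw [hneg0, zero_add]
  · rintro u ⟨w, hw, hwi, rfl⟩ r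
    show mpStar P r i ≤ mpNeg (w i) + w r
    have hpowv : ∀ (m : ℕ) (r : Fin n), mpPow P m r i + w i ≤ w r := by
      intro m
      induction m with
      | zero =>
          intro r
          by_cases hri : r = i
          · have h0 : mpPow P 0 r i = 0 := by simp [mpPow, mpId, hri]
            rw [h0, zero_add, hri]
          · have h0 : mpPow P 0 r i = ⊥ := by simp [mpPow, mpId, hri]
            rw [h0, WithBot.bot_add]; exact bot_le
      | succ m ih =>
          intro r
          rw [hpow_succ, SCM.sup_add]
          apply Finset.sup_le
          intro j _
          calc P r j + mpPow P m j i + w i = P r j + (mpPow P m j i + w i) :=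
                add_assoc _ _ _
            _ ≤ P r j + w j := add_le_add_right (ih j) _
            _ ≤ mpMulVec P w r :=
                Finset.le_sup (f := fun j => P r j + w j) (Finset.mem_univ j)
            _ = w r := by rw [hw]
    obtain ⟨x, hx⟩ := WithBot.ne_bot_iff_exists.mp hwi
    have hneg : mpNeg (w i) = ((-x : ℝ) : RMax) := by rw [← hx]; simp [mpNeg]
    rw [hneg]
    apply Finset.sup_le
    intro k _
    have h1 : mpPow P k r i + (x : RMax) ≤ w r := by rw [hx]; exact hpowv k r
    rcases eq_or_ne (mpPow P k r i) ⊥ with hb | hb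
    · rw [hb]; exact bot_le
    · obtain ⟨p, hp⟩ := WithBot.ne_bot_iff_exists.mp hb
      rw [← hp] at h1 ⊢
      rcases eq_or_ne (w r) ⊥ with hwr | hwr
      · exfalso
        rw [hwr, ← WithBot.coe_add] at h1
        exact absurd (le_bot_iff.mp h1) (by simp)
      · obtain ⟨y, hy⟩ := WithBot.ne_bot_iff_exists.mp hwr
        rw [← hy] at h1 ⊢
        rw [← WithBot.coe_add] at h1 ⊢
        rw [WithBot.coe_le_coe] at h1 ⊢
        linarith
end

section
/- Let A ∈ ℝ_max^{n×n} and let C₁ and C₂ be ε-maximal multi-circuits of G(A) such that the map ξ_{A,C₂} is well defined (i.e., with K = V(C₂), the graph of M := [A_{C₂}]_{KK}^{−1} ⊗ [A_{∖C₂}]_{KK} has no circuit of nonnegative weight). If x ∈ ℝ_max^n satisfies A_{∖C₁} ⊗ x = A_{C₁} ⊗ x (that is, x ∈ W(A,ε,C₁)), then ξ_{A,C₂}(x) ≥ x entrywise. -/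
open Filter

/-! ## Auxiliary lemmas -/

section Aux

lemma rmax_bot_lt_zero : (⊥ : RMax) < 0 := bot_lt_iff_ne_bot.mpr (by simp)

lemma rmax_cancel {a u v : RMax} (ha : a ≠ ⊥) (h : a + u ≤ a + v) : u ≤ v := by
  lift a to ℝ using ha
  induction u using WithBot.recBotCoe with
  | bot => exact bot_le
  | coe u =>
    induction v using WithBot.recBotCoe with
    | bot => simp only [WithBot.add_bot, ← WithBot.coe_add, le_bot_iff] at h; simp at h
    | coe v =>
      rw [← WithBot.coe_add, ← WithBot.coe_add, WithBot.coe_le_coe] at h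
      exact WithBot.coe_le_coe.mpr (le_of_add_le_add_left h)

lemma rmax_add_neg {a : RMax} (ha : a ≠ ⊥) : a + mpNeg a = 0 := by
  lift a to ℝ using ha
  rw [mpNeg, WithBot.map_coe, ← WithBot.coe_add]
  norm_num

lemma rmax_lt_add {w z : RMax} (hw : w < 0) (hz : z ≠ ⊥) : w + z < z := by
  lift z to ℝ using hz
  induction w using WithBot.recBotCoe with
  | bot => simpa using WithBot.bot_lt_coe z
  | coe w =>
    rw [← WithBot.coe_add, WithBot.coe_lt_coe]
    have : w < 0 := by exact_mod_cast hw
    linarith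

lemma rmax_nsmul_coe (m : ℕ) (r : ℝ) : (m • (r : RMax)) = ((m • r : ℝ) : RMax) := by
  induction m with
  | zero => simp
  | succ m ih => rw [succ_nsmul, succ_nsmul, ih, WithBot.coe_add]

lemma rmax_add_max (a u v : RMax) : a + max u v = max (a + u) (a + v) := by
  rcases le_total u v with h | h
  · rw [max_eq_right h, max_eq_right (add_le_add_right h a)]
  · rw [max_eq_left h, max_eq_left (add_le_add_right h a)]

lemma rmax_add_sup {κ : Type} (a : RMax) (s : Finset κ) (f : κ → RMax) :
    a + s.sup f = s.sup fun b => a + f b := by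
  classical
  induction s using Finset.induction with
  | empty => simp
  | insert _ _ h ih =>
    rw [Finset.sup_insert, Finset.sup_insert, rmax_add_max, ih]

lemma rmax_sum_eq_bot {κ : Type} {s : Finset κ} {f : κ → RMax} {k : κ}
    (hk : k ∈ s) (h : f k = ⊥) : ∑ i ∈ s, f i = ⊥ := by
  classical
  rw [← Finset.add_sum_erase s f hk, h]
  exact WithBot.bot_add _

lemma rmax_neg_add_lt {a b : RMax} (ha : a < 0) (hb : b < 0) : a + b < 0 := by
  have : a + b ≤ a + 0 := add_le_add_right hb.le a
  rw [add_zero] at this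
  exact this.trans_lt ha

/-! ### Walks -/

variable {κ : Type} [Fintype κ] [DecidableEq κ]

/-- The weight of the length-`p` walk `g 0, g 1, …, g p` in the matrix `M`. -/
def wsum (M : Matrix κ κ RMax) (g : ℕ → κ) (p : ℕ) : RMax :=
  ∑ s ∈ Finset.range p, M (g s) (g (s + 1))

lemma wsum_le_pow (M : Matrix κ κ RMax) (g : ℕ → κ) :
    ∀ p, wsum M g p ≤ mpPow M p (g 0) (g p) := by
  intro p
  induction p generalizing g with
  | zero => simp [wsum, mpPow, mpId]
  | succ p ih =>
    have h1 : wsum M g (p + 1) = M (g 0) (g 1) + wsum M (fun s => g (s + 1)) p := by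
      rw [wsum, Finset.sum_range_succ', wsum, add_comm]
    rw [h1]
    have h2 := ih (fun s => g (s + 1))
    calc M (g 0) (g 1) + wsum M (fun s => g (s + 1)) p
        ≤ M (g 0) (g 1) + mpPow M p (g 1) (g (p + 1)) := add_le_add_right h2 _
      _ ≤ mpPow M (p + 1) (g 0) (g (p + 1)) := by
          exact Finset.le_sup (f := fun k => M (g 0) k + mpPow M p k (g (p+1)))
            (Finset.mem_univ (g 1))

lemma pow_witness (M : Matrix κ κ RMax) :
    ∀ (p : ℕ) (i j : κ), mpPow M p i j ≠ ⊥ →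
      ∃ g : ℕ → κ, g 0 = i ∧ g p = j ∧ mpPow M p i j = wsum M g p := by
  intro p
  induction p with
  | zero =>
    intro i j h
    by_cases hij : i = j
    · subst hij
      exact ⟨fun _ => i, rfl, rfl, by simp [wsum, mpPow, mpId]⟩
    · exact absurd (by simp [mpPow, mpId, hij]) h
  | succ p ih =>
    intro i j h
    have hne : (Finset.univ : Finset κ).Nonempty := ⟨i, Finset.mem_univ i⟩
    obtain ⟨k, -, hk⟩ := Finset.exists_mem_eq_sup Finset.univ hne
      (fun k => M i k + mpPow M p k j)
    have hval : mpPow M (p+1) i j = M i k + mpPow M p k j := hk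
    have hpk : mpPow M p k j ≠ ⊥ := by
      intro hb
      rw [hval, hb, WithBot.add_bot] at h
      exact h rfl
    obtain ⟨g', hg0, hgp, hw⟩ := ih k j hpk
    refine ⟨fun s => if s = 0 then i else g' (s - 1), by simp, by simp [hgp], ?_⟩
    have h1 : wsum M (fun s => if s = 0 then i else g' (s - 1)) (p + 1)
        = M i (g' 0) + wsum M g' p := by
      rw [wsum, Finset.sum_range_succ', add_comm, wsum]
      simp
    rw [h1, hg0, hval, hw]
end Aux
section Walks

variable {κ : Type} [Fintype κ] [DecidableEq κ]

/-- Splice out the segment of length `d` starting at `s₁` of a walk. -/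
def splice (g : ℕ → κ) (s₁ d : ℕ) : ℕ → κ := fun s => if s < s₁ then g s else g (s + d)

lemma splice_zero {g : ℕ → κ} {s₁ d : ℕ} (he : g s₁ = g (s₁ + d)) :
    splice g s₁ d 0 = g 0 := by
  unfold splice
  by_cases h : 0 < s₁
  · rw [if_pos h]
  · have hs : s₁ = 0 := by omega
    rw [if_neg h]
    rw [hs] at he
    exact he.symm

lemma splice_end {g : ℕ → κ} {s₁ d p : ℕ} (h1 : s₁ + d ≤ p) :
    splice g s₁ d (p - d) = g p := by
  unfold splice
  rw [if_neg (by omega), show p - d + d = p by omega]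

lemma wsum_splice (M : Matrix κ κ RMax) (g : ℕ → κ) {s₁ s₂ p : ℕ}
    (h1 : s₁ ≤ s₂) (h2 : s₂ ≤ p) (he : g s₁ = g s₂) :
    wsum M g p = wsum M (splice g s₁ (s₂ - s₁)) (p - (s₂ - s₁))
      + wsum M (fun s => g (s + s₁)) (s₂ - s₁) := by
  set d := s₂ - s₁ with hd
  set F : ℕ → RMax := fun s => M (g s) (g (s + 1)) with hF
  have hterm : ∀ s, M (splice g s₁ d s) (splice g s₁ d (s + 1))
      = if s < s₁ then F s else F (s + d) := by
    intro s
    by_cases hs : s < s₁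
    · rw [if_pos hs]
      unfold splice
      rw [if_pos hs]
      by_cases hs' : s + 1 < s₁
      · rw [if_pos hs']
      · have hseq : s + 1 = s₁ := by omega
        rw [if_neg hs', hseq, show s₁ + d = s₂ by omega, ← he, ← hseq]
    · rw [if_neg hs]
      unfold splice
      rw [if_neg hs, if_neg (by omega), show s + 1 + d = s + d + 1 by omega]
  have e1 : wsum M (splice g s₁ d) (p - d)
      = (∑ s ∈ Finset.range s₁, F s) + ∑ s ∈ Finset.Ico s₁ (p - d), F (s + d) := by
    rw [wsum, Finset.range_eq_Ico,
      ← Finset.sum_Ico_consecutive _ (Nat.zero_le s₁) (by omega : s₁ ≤ p - d),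
      ← Finset.range_eq_Ico]
    congr 1
    · exact Finset.sum_congr rfl fun s hs => by
        rw [hterm s, if_pos (Finset.mem_range.mp hs)]
    · exact Finset.sum_congr rfl fun s hs => by
        rw [hterm s, if_neg (Nat.not_lt.mpr (Finset.mem_Ico.mp hs).1)]
  have e2 : ∑ s ∈ Finset.Ico s₁ (p - d), F (s + d) = ∑ s ∈ Finset.Ico s₂ p, F s := by
    rw [Finset.sum_Ico_eq_sum_range, Finset.sum_Ico_eq_sum_range,
      show p - d - s₁ = p - s₂ by omega]
    exact Finset.sum_congr rfl fun s _ => by rw [show s₁ + s + d = s₂ + s by omega]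
  have e3 : wsum M (fun s => g (s + s₁)) d = ∑ s ∈ Finset.Ico s₁ s₂, F s := by
    rw [wsum, Finset.sum_Ico_eq_sum_range, show s₂ - s₁ = d from rfl]
    refine Finset.sum_congr rfl fun s _ => ?_
    show M (g (s + s₁)) (g (s + 1 + s₁)) = F (s₁ + s)
    rw [hF, show s + s₁ = s₁ + s by omega, show s + 1 + s₁ = s₁ + s + 1 by omega]
  have e0 : wsum M g p = (∑ s ∈ Finset.range s₁, F s)
      + ((∑ s ∈ Finset.Ico s₁ s₂, F s) + ∑ s ∈ Finset.Ico s₂ p, F s) := by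
    rw [Finset.sum_Ico_consecutive F h1 h2, Finset.range_eq_Ico,
      Finset.sum_Ico_consecutive F (Nat.zero_le s₁) (h1.trans h2), wsum,
      Finset.range_eq_Ico]
  rw [e1, e2, e3, e0]
  ac_rfl

theorem closed_walk_neg (M : Matrix κ κ RMax)
    (hwdM : ∀ D : MultiCircuit κ, IsCircuit D → InGraph M D → mcWeight M D < 0) :
    ∀ p, 0 < p → ∀ g : ℕ → κ, g p = g 0 → wsum M g p < 0 := by
  intro p
  induction p using Nat.strong_induction_on with
  | _ p IH =>
  intro hp g hcl
  by_cases hbot : ∃ s, s < p ∧ M (g s) (g (s + 1)) = ⊥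
  · obtain ⟨s, hs, hb⟩ := hbot
    rw [wsum, rmax_sum_eq_bot (Finset.mem_range.mpr hs) hb]
    exact rmax_bot_lt_zero
  by_cases hrep : ∃ s₁ s₂, s₁ < s₂ ∧ s₂ < p ∧ g s₁ = g s₂
  · obtain ⟨s₁, s₂, hlt, hs₂p, he⟩ := hrep
    rw [wsum_splice M g hlt.le hs₂p.le he]
    have c1 : wsum M (splice g s₁ (s₂ - s₁)) (p - (s₂ - s₁)) < 0 := by
      refine IH _ (by omega) (by omega) _ ?_
      rw [splice_end (by omega), splice_zero (show g s₁ = g (s₁ + (s₂ - s₁)) by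
        rw [show s₁ + (s₂ - s₁) = s₂ by omega]; exact he)]
      exact hcl
    have c2 : wsum M (fun s => g (s + s₁)) (s₂ - s₁) < 0 := by
      refine IH _ (by omega) (by omega) _ ?_
      show g (s₂ - s₁ + s₁) = g (0 + s₁)
      rw [show s₂ - s₁ + s₁ = s₂ by omega, zero_add, ← he]
    exact rmax_neg_add_lt c1 c2
  push_neg at hbot hrep
  have hinj : ∀ s, s < p → ∀ t, t < p → g s = g t → s = t := by
    intro s hs t ht h
    rcases lt_trichotomy s t with hc | hc | hc
    · exact absurd h (hrep s t hc ht)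
    · exact hc
    · exact absurd h.symm (hrep t s hc hs)
  by_cases hp1 : p = 1
  · subst hp1
    rw [wsum, Finset.sum_range_one, hcl]
    have hc : IsCircuit (⟨{g 0}, 1, fun _ _ => rfl⟩ : MultiCircuit κ) := by
      refine ⟨⟨g 0, Finset.mem_singleton_self _⟩, ?_⟩
      intro a ha b hb
      rw [Finset.mem_singleton] at ha hb
      subst ha; subst hb
      exact Equiv.Perm.SameCycle.refl _ _
    have hg2 : InGraph M (⟨{g 0}, 1, fun _ _ => rfl⟩ : MultiCircuit κ) := by
      intro a ha
      rw [Finset.mem_singleton] at ha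
      subst ha
      have h0 := hbot 0 (by omega)
      rw [hcl] at h0
      simpa using h0
    have hW := hwdM _ hc hg2
    simpa [mcWeight] using hW
  · have hp2 : 2 ≤ p := by omega
    set l : List κ := (List.range p).map g with hl
    have hlen : l.length = p := by simp [hl]
    have hnd : l.Nodup := by
      rw [hl]
      exact List.Nodup.map_on
        (fun s hs t ht hst => hinj s (by simpa using hs) t (by simpa using ht) hst)
        List.nodup_range
    have hmem : ∀ s, s < p → g s ∈ l := fun a ha => by
      rw [hl]; exact List.mem_map.mpr ⟨a, by simpa using ha, rfl⟩
    have hfp : ∀ s, s < p → l.formPerm (g s) = g ((s + 1) % p) := by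
      intro s hs
      have hsl : s < l.length := by rw [hlen]; exact hs
      have e1 := List.formPerm_apply_getElem l hnd s hsl
      have e2 : l[s]'hsl = g s := by simp [hl]
      have e3 : l[(s + 1) % l.length]'(Nat.mod_lt _ (by omega)) = g ((s + 1) % p) := by
        simp [hl]
      rw [e2] at e1
      rw [e1, e3]
    have hedge : ∀ s, s < p → M (g s) (l.formPerm (g s)) = M (g s) (g (s + 1)) := by
      intro s hs
      rw [hfp s hs]
      by_cases h : s + 1 < p
      · rw [Nat.mod_eq_of_lt h]
      · have hs1 : s + 1 = p := by omega
        rw [hs1, Nat.mod_self, ← hcl]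
    set D : MultiCircuit κ := ⟨l.toFinset, l.formPerm,
      fun a ha => List.formPerm_apply_of_notMem (l := l) (x := a)
        (fun hm => ha (List.mem_toFinset.mpr hm))⟩ with hDdef
    have hc : IsCircuit D := by
      refine ⟨⟨g 0, List.mem_toFinset.mpr (hmem 0 (by omega))⟩, ?_⟩
      intro a ha b hb
      have hal : a ∈ l := List.mem_toFinset.mp ha
      have hbl : b ∈ l := List.mem_toFinset.mp hb
      have h2l : 2 ≤ l.length := by rw [hlen]; exact hp2
      exact (List.isCycle_formPerm hnd h2l).sameCycle
        ((List.formPerm_apply_mem_ne_self_iff _ hnd a hal).mpr h2l)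
        ((List.formPerm_apply_mem_ne_self_iff _ hnd b hbl).mpr h2l)
    have hg2 : InGraph M D := by
      intro a ha
      obtain ⟨s, hs, rfl⟩ : ∃ s, s < p ∧ g s = a := by
        have hml := List.mem_toFinset.mp ha
        rw [hl] at hml
        obtain ⟨s, hs, h⟩ := List.mem_map.mp hml
        exact ⟨s, by simpa using hs, h⟩
      show M (g s) (l.formPerm (g s)) ≠ ⊥
      rw [hedge s hs]
      exact hbot s hs
    have himg : l.toFinset = (Finset.range p).image g := by
      ext a
      simp [hl]
    have hwt : mcWeight M D = wsum M g p := by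
      show (∑ a ∈ l.toFinset, M a (l.formPerm a)) = _
      rw [himg, Finset.sum_image (fun s hs t ht h =>
        hinj s (Finset.mem_range.mp hs) t (Finset.mem_range.mp ht) h), wsum]
      exact Finset.sum_congr rfl fun s hs => by rw [hedge s (Finset.mem_range.mp hs)]
    rw [← hwt]
    exact hwdM D hc hg2

end Walks
section Star

variable {κ : Type} [Fintype κ] [DecidableEq κ]

theorem pow_le_star (M : Matrix κ κ RMax)
    (hwdM : ∀ D : MultiCircuit κ, IsCircuit D → InGraph M D → mcWeight M D < 0) :
    ∀ (p : ℕ) (i j : κ), mpPow M p i j ≤ mpStar M i j := by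
  intro p
  induction p using Nat.strong_induction_on with
  | _ p IH =>
  intro i j
  by_cases hp : p < Fintype.card κ
  · exact Finset.le_sup (f := fun k => mpPow M k i j) (Finset.mem_range.mpr hp)
  push_neg at hp
  have hcard : 0 < Fintype.card κ := Fintype.card_pos_iff.mpr ⟨i⟩
  by_cases hb : mpPow M p i j = ⊥
  · rw [hb]; exact bot_le
  obtain ⟨g, hg0, hgp, hval⟩ := pow_witness M p i j hb
  obtain ⟨a, b, hab, hgab⟩ := Fintype.exists_ne_map_eq_of_card_lt
    (fun s : Fin (Fintype.card κ + 1) => g s) (by simp)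
  obtain ⟨s₁, s₂, hlt, hs₂, he⟩ : ∃ s₁ s₂ : ℕ, s₁ < s₂ ∧ s₂ ≤ Fintype.card κ ∧ g s₁ = g s₂ := by
    rcases lt_or_gt_of_ne hab with h | h
    · exact ⟨a, b, h, Nat.lt_succ_iff.mp b.isLt, hgab⟩
    · exact ⟨b, a, h, Nat.lt_succ_iff.mp a.isLt, hgab.symm⟩
  have hs₂p : s₂ ≤ p := hs₂.trans hp
  have hneg : wsum M (fun s => g (s + s₁)) (s₂ - s₁) < 0 := by
    refine closed_walk_neg M hwdM _ (by omega) _ ?_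
    show g (s₂ - s₁ + s₁) = g (0 + s₁)
    rw [show s₂ - s₁ + s₁ = s₂ by omega, zero_add, ← he]
  calc mpPow M p i j = wsum M g p := hval
    _ = wsum M (splice g s₁ (s₂ - s₁)) (p - (s₂ - s₁))
        + wsum M (fun s => g (s + s₁)) (s₂ - s₁) := wsum_splice M g hlt.le hs₂p he
    _ ≤ wsum M (splice g s₁ (s₂ - s₁)) (p - (s₂ - s₁)) + 0 := add_le_add_right hneg.le _
    _ = wsum M (splice g s₁ (s₂ - s₁)) (p - (s₂ - s₁)) := add_zero _
    _ ≤ mpPow M (p - (s₂ - s₁)) (splice g s₁ (s₂ - s₁) 0) (splice g s₁ (s₂ - s₁) (p - (s₂ - s₁))) :=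
        wsum_le_pow M _ _
    _ = mpPow M (p - (s₂ - s₁)) i j := by
        rw [splice_end (by omega), splice_zero (show g s₁ = g (s₁ + (s₂ - s₁)) by
          rw [show s₁ + (s₂ - s₁) = s₂ by omega]; exact he), hg0, hgp]
    _ ≤ mpStar M i j := IH _ (by omega) i j

lemma le_star_mulVec (M : Matrix κ κ RMax) (bv : Vec κ) (k : κ) :
    bv k ≤ mpMulVec (mpStar M) bv k := by
  have h1 : (0 : RMax) ≤ mpStar M k k := by
    have hcard : 0 < Fintype.card κ := Fintype.card_pos_iff.mpr ⟨k⟩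
    have : mpPow M 0 k k = 0 := by simp [mpPow, mpId]
    rw [← this]
    exact Finset.le_sup (f := fun t => mpPow M t k k) (Finset.mem_range.mpr hcard)
  calc bv k = 0 + bv k := (zero_add _).symm
    _ ≤ mpStar M k k + bv k := add_le_add_left h1 _
    _ ≤ mpMulVec (mpStar M) bv k := Finset.le_sup (f := fun i => mpStar M k i + bv i)
        (Finset.mem_univ k)

lemma star_absorb (M : Matrix κ κ RMax)
    (hwdM : ∀ D : MultiCircuit κ, IsCircuit D → InGraph M D → mcWeight M D < 0)
    (bv : Vec κ) (k : κ) :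
    mpMulVec M (mpMulVec (mpStar M) bv) k ≤ mpMulVec (mpStar M) bv k := by
  refine Finset.sup_le fun j _ => ?_
  show M k j + mpMulVec (mpStar M) bv j ≤ _
  rw [mpMulVec, rmax_add_sup]
  refine Finset.sup_le fun i _ => ?_
  have h1 : M k j + mpStar M j i ≤ mpStar M k i := by
    rw [mpStar, rmax_add_sup]
    refine Finset.sup_le fun t _ => ?_
    have h2 : M k j + mpPow M t j i ≤ mpPow M (t + 1) k i :=
      Finset.le_sup (f := fun m => M k m + mpPow M t m i) (Finset.mem_univ j)
    exact h2.trans (pow_le_star M hwdM (t + 1) k i)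
  calc M k j + (mpStar M j i + bv i) = (M k j + mpStar M j i) + bv i := (add_assoc _ _ _).symm
    _ ≤ mpStar M k i + bv i := add_le_add_left h1 _
    _ ≤ mpMulVec (mpStar M) bv k := Finset.le_sup (f := fun i => mpStar M k i + bv i)
        (Finset.mem_univ i)

lemma telescope (M : Matrix κ κ RMax) (xv : Vec κ) (g : ℕ → κ)
    (hc : ∀ s, xv (g s) ≤ M (g s) (g (s + 1)) + xv (g (s + 1))) :
    ∀ p, xv (g 0) ≤ wsum M g p + xv (g p) := by
  intro p
  induction p with
  | zero => simp [wsum]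
  | succ p ih =>
    calc xv (g 0) ≤ wsum M g p + xv (g p) := ih
      _ ≤ wsum M g p + (M (g p) (g (p + 1)) + xv (g (p + 1))) := add_le_add_right (hc p) _
      _ = wsum M g (p + 1) + xv (g (p + 1)) := by
          conv_rhs => rw [wsum, Finset.sum_range_succ]
          exact (add_assoc _ _ _).symm

theorem main_solve (M : Matrix κ κ RMax)
    (hwdM : ∀ D : MultiCircuit κ, IsCircuit D → InGraph M D → mcWeight M D < 0)
    (bv xv : Vec κ)
    (hstep : ∀ k, xv k ≤ max (mpMulVec M xv k) (bv k)) :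
    ∀ k, xv k ≤ mpMulVec (mpStar M) bv k := by
  intro k0
  by_contra hk0
  set y : Vec κ := mpMulVec (mpStar M) bv with hy
  have hch : ∀ k, ¬ xv k ≤ y k → ∃ j, (¬ xv j ≤ y j) ∧ xv k ≤ M k j + xv j ∧ xv k ≠ ⊥ := by
    intro k hk
    have hxkb : xv k ≠ ⊥ := fun h => hk (h ▸ bot_le)
    have hxk : xv k ≤ mpMulVec M xv k := by
      rcases le_max_iff.mp (hstep k) with h | h
      · exact h
      · exact absurd (h.trans (le_star_mulVec M bv k)) hk
    obtain ⟨j, -, hj⟩ := Finset.exists_mem_eq_sup Finset.univ ⟨k, Finset.mem_univ k⟩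
      (fun j => M k j + xv j)
    have hxkj : xv k ≤ M k j + xv j := by rw [mpMulVec, hj] at hxk; exact hxk
    refine ⟨j, ?_, hxkj, hxkb⟩
    intro hjy
    apply hk
    calc xv k ≤ M k j + xv j := hxkj
      _ ≤ M k j + y j := add_le_add_right hjy _
      _ ≤ mpMulVec M y k := Finset.le_sup (f := fun j => M k j + y j) (Finset.mem_univ j)
      _ ≤ y k := star_absorb M hwdM bv k
  choose! F hF1 hF2 hF3 using hch
  set g : ℕ → κ := fun s => F^[s] k0 with hg
  have hgS : ∀ s, ¬ xv (g s) ≤ y (g s) := by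
    intro s
    induction s with
    | zero => exact hk0
    | succ s ih =>
      have : g (s + 1) = F (g s) := by rw [hg]; exact Function.iterate_succ_apply' F s k0
      rw [this]
      exact hF1 (g s) ih
  have hchain : ∀ s, xv (g s) ≤ M (g s) (g (s + 1)) + xv (g (s + 1)) := by
    intro s
    have hsucc : g (s + 1) = F (g s) := by rw [hg]; exact Function.iterate_succ_apply' F s k0
    rw [hsucc]
    exact hF2 (g s) (hgS s)
  obtain ⟨a, b, hab, hgab⟩ := Fintype.exists_ne_map_eq_of_card_lt
    (fun s : Fin (Fintype.card κ + 1) => g s) (by simp)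
  obtain ⟨s₁, s₂, hlt, he⟩ : ∃ s₁ s₂ : ℕ, s₁ < s₂ ∧ g s₁ = g s₂ := by
    rcases lt_or_gt_of_ne hab with h | h
    · exact ⟨a, b, h, hgab⟩
    · exact ⟨b, a, h, hgab.symm⟩
  have htel := telescope M xv (fun s => g (s₁ + s)) (fun s => hchain (s₁ + s)) (s₂ - s₁)
  have hclosed : wsum M (fun s => g (s₁ + s)) (s₂ - s₁) < 0 := by
    refine closed_walk_neg M hwdM _ (by omega) _ ?_
    show g (s₁ + (s₂ - s₁)) = g (s₁ + 0)
    rw [show s₁ + (s₂ - s₁) = s₂ by omega, ← he, add_zero]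
  have hxb : xv (g (s₁ + 0)) ≠ ⊥ := hF3 (g (s₁ + 0)) (hgS (s₁ + 0))
  have hend : g (s₁ + (s₂ - s₁)) = g (s₁ + 0) := by
    rw [show s₁ + (s₂ - s₁) = s₂ by omega, ← he, add_zero]
  rw [hend] at htel
  exact absurd htel (not_le.mpr (rmax_lt_add hclosed hxb))

end Star
/-! ## Statement 11 -/
theorem xi_ge_of_WAC {n : ℕ} (A : Matrix (Fin n) (Fin n) RMax)
    (C₁ C₂ : MultiCircuit (Fin n))
    (h₁ : IsLamMax A C₁ (⊥ : RMax)) (h₂ : IsLamMax A C₂ (⊥ : RMax))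
    (hwd : ∀ D : MultiCircuit {k // k ∈ C₂.verts}, IsCircuit D → InGraph (xiM A C₂) D →
      mcWeight (xiM A C₂) D < 0)
    (x : Vec (Fin n)) (hx : mpMulVec (matNotC A C₁) x = mpMulVec (matC A C₁) x) :
    ∀ i : Fin n, x i ≤ xi A C₂ x i := by
  -- Step A: `C₂` lies in `G(A)` (its edges have finite weight)
  have hIG : ∀ i ∈ C₂.verts, A i (C₂.perm i) ≠ ⊥ := by
    obtain ⟨μ₀, hμ⟩ := h₂.2 rfl
    have hmax := hμ μ₀ le_rfl (⟨∅, 1, fun _ _ => rfl⟩ : MultiCircuit (Fin n))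
    have hW : mcWeight A C₂ ≠ ⊥ := by
      intro hbot
      rw [ValAt, ValAt, hbot, WithBot.bot_add] at hmax
      have hz : mcWeight A (⟨∅, 1, fun _ _ => rfl⟩ : MultiCircuit (Fin n)) = 0 := by
        simp [mcWeight]
      rw [hz, zero_add, rmax_nsmul_coe] at hmax
      exact absurd (le_bot_iff.mp hmax) WithBot.coe_ne_bot
    intro i hi hb
    refine hW ?_
    rw [mcWeight]
    exact rmax_sum_eq_bot hi hb
  have hmaps' : ∀ v, v ∈ C₂.verts → C₂.perm.symm v ∈ C₂.verts := by
    intro v hv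
    by_contra hnv
    have h1 := C₂.fixes _ hnv
    rw [Equiv.apply_symm_apply] at h1
    rw [← h1] at hnv
    exact hnv hv
  -- Step B: key inequality `A_{C₂} ⊗ x ≤ A_{∖C₂} ⊗ x`
  have hkey : ∀ i, mpMulVec (matC A C₂) x i ≤ mpMulVec (matNotC A C₂) x i := by
    intro i
    refine Finset.sup_le fun j _ => ?_
    show matC A C₂ i j + x j ≤ _
    by_cases hc : i ∈ C₂.verts ∧ j = C₂.perm i
    case neg =>
      have h0 : matC A C₂ i j = ⊥ := by simp only [matC]; rw [if_neg hc]
      rw [h0, WithBot.bot_add]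
      exact bot_le
    case pos =>
      have h0 : matC A C₂ i j = A i j := by simp only [matC]; rw [if_pos hc]
      rw [h0]
      by_cases hc1 : i ∈ C₁.verts ∧ j = C₁.perm i
      · have e1 : A i j + x j ≤ mpMulVec (matC A C₁) x i := by
          have h' : matC A C₁ i j = A i j := by simp only [matC]; rw [if_pos hc1]
          rw [← h']
          exact Finset.le_sup (f := fun m => matC A C₁ i m + x m) (Finset.mem_univ j)
        rw [← hx] at e1
        refine e1.trans (Finset.sup_le fun m _ => ?_)
        show matNotC A C₁ i m + x m ≤ _
        by_cases hm : i ∈ C₁.verts ∧ m = C₁.perm i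
        · have h'' : matNotC A C₁ i m = ⊥ := by simp only [matNotC]; rw [if_pos hm]
          rw [h'', WithBot.bot_add]
          exact bot_le
        · have hm2 : ¬(i ∈ C₂.verts ∧ m = C₂.perm i) := by
            rintro ⟨h2v, hm2⟩
            exact hm ⟨hc1.1, by rw [hm2, ← hc.2]; exact hc1.2⟩
          have e2 : matNotC A C₁ i m = A i m := by simp only [matNotC]; rw [if_neg hm]
          have e3 : matNotC A C₂ i m = A i m := by simp only [matNotC]; rw [if_neg hm2]
          rw [e2, ← e3]
          exact Finset.le_sup (f := fun m => matNotC A C₂ i m + x m) (Finset.mem_univ m)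
      · have e1 : A i j + x j ≤ mpMulVec (matNotC A C₁) x i := by
          have h' : matNotC A C₁ i j = A i j := by simp only [matNotC]; rw [if_neg hc1]
          rw [← h']
          exact Finset.le_sup (f := fun m => matNotC A C₁ i m + x m) (Finset.mem_univ j)
        rw [hx] at e1
        refine e1.trans (Finset.sup_le fun m _ => ?_)
        show matC A C₁ i m + x m ≤ _
        by_cases hm : i ∈ C₁.verts ∧ m = C₁.perm i
        · have hm2 : ¬(i ∈ C₂.verts ∧ m = C₂.perm i) := by
            rintro ⟨h2v, hm2⟩
            exact hc1 ⟨hm.1, by rw [hc.2, ← hm2]; exact hm.2⟩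
          have e2 : matC A C₁ i m = A i m := by simp only [matC]; rw [if_pos hm]
          have e3 : matNotC A C₂ i m = A i m := by simp only [matNotC]; rw [if_neg hm2]
          rw [e2, ← e3]
          exact Finset.le_sup (f := fun m => matNotC A C₂ i m + x m) (Finset.mem_univ m)
        · have h'' : matC A C₁ i m = ⊥ := by simp only [matC]; rw [if_neg hm]
          rw [h'', WithBot.bot_add]
          exact bot_le
  -- Step C and conclusion
  intro i0
  simp only [xi]
  split_ifs with hiv0
  swap
  · exact le_refl _
  set cc : Vec {k // k ∈ C₂.verts} := fun k =>
    (Finset.univ.filter fun j : Fin n => j ∉ C₂.verts).sup fun j => A k.1 j + x j with hcc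
  set bb : Vec {k // k ∈ C₂.verts} := mpMulVec (genInv (subPC A C₂)) cc with hbb
  set MM := xiM A C₂ with hMM
  set xK : Vec {k // k ∈ C₂.verts} := fun k => x k.1 with hxK
  have hstep : ∀ k : {k // k ∈ C₂.verts}, xK k ≤ max (mpMulVec MM xK k) (bb k) := by
    intro k
    set i := C₂.perm.symm k.1 with hidef
    have hiv : i ∈ C₂.verts := hmaps' k.1 k.2
    have hpi : C₂.perm i = k.1 := Equiv.apply_symm_apply _ _
    have ha : A i k.1 ≠ ⊥ := by have h' := hIG i hiv; rwa [hpi] at h'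
    have hPC : matC A C₂ i k.1 = A i k.1 := by simp only [matC]; rw [if_pos ⟨hiv, hpi.symm⟩]
    have hgi : genInv (subPC A C₂) k ⟨i, hiv⟩ = mpNeg (A i k.1) := by
      show mpNeg (matC A C₂ i k.1) = _
      rw [hPC]
    have h1 : A i k.1 + x k.1 ≤ mpMulVec (matNotC A C₂) x i := by
      refine le_trans ?_ (hkey i)
      rw [← hPC]
      exact Finset.le_sup (f := fun m => matC A C₂ i m + x m) (Finset.mem_univ k.1)
    have h2 : mpMulVec (matNotC A C₂) x i ≤ A i k.1 + max (mpMulVec MM xK k) (bb k) := by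
      refine Finset.sup_le fun j _ => ?_
      show matNotC A C₂ i j + x j ≤ _
      by_cases hjv : j ∈ C₂.verts
      · have hMge : mpNeg (A i k.1) + matNotC A C₂ i j ≤ MM k ⟨j, hjv⟩ := by
          rw [hMM]
          have heq : genInv (subPC A C₂) k ⟨i, hiv⟩ + subPNC A C₂ ⟨i, hiv⟩ ⟨j, hjv⟩
              = mpNeg (A i k.1) + matNotC A C₂ i j := by rw [hgi]; rfl
          rw [← heq]
          exact Finset.le_sup (f := fun m => genInv (subPC A C₂) k m + subPNC A C₂ m ⟨j, hjv⟩)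
            (Finset.mem_univ (⟨i, hiv⟩ : {k // k ∈ C₂.verts}))
        calc matNotC A C₂ i j + x j = 0 + (matNotC A C₂ i j + x j) := (zero_add _).symm
          _ = (A i k.1 + mpNeg (A i k.1)) + (matNotC A C₂ i j + x j) := by rw [rmax_add_neg ha]
          _ = A i k.1 + ((mpNeg (A i k.1) + matNotC A C₂ i j) + x j) := by
              rw [add_assoc, ← add_assoc (mpNeg (A i k.1))]
          _ ≤ A i k.1 + (MM k ⟨j, hjv⟩ + xK ⟨j, hjv⟩) :=
              add_le_add_right (add_le_add_left hMge _) _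
          _ ≤ A i k.1 + mpMulVec MM xK k :=
              add_le_add_right (Finset.le_sup (f := fun m => MM k m + xK m) (Finset.mem_univ _)) _
          _ ≤ _ := add_le_add_right (le_max_left _ _) _
      · have hnb : matNotC A C₂ i j = A i j := by
          simp only [matNotC]
          rw [if_neg]
          rintro ⟨-, hj2⟩
          apply hjv
          rw [hj2, hpi]
          exact k.2
        have hccge : A i j + x j ≤ cc ⟨i, hiv⟩ := by
          show A i j + x j ≤ (Finset.univ.filter fun j' : Fin n => j' ∉ C₂.verts).sup
            fun j' => A i j' + x j'
          exact Finset.le_sup (f := fun j' => A i j' + x j')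
            (Finset.mem_filter.mpr ⟨Finset.mem_univ j, hjv⟩)
        have hbge : mpNeg (A i k.1) + cc ⟨i, hiv⟩ ≤ bb k := by
          rw [hbb, ← hgi]
          exact Finset.le_sup (f := fun m => genInv (subPC A C₂) k m + cc m) (Finset.mem_univ _)
        calc matNotC A C₂ i j + x j = A i j + x j := by rw [hnb]
          _ = 0 + (A i j + x j) := (zero_add _).symm
          _ = (A i k.1 + mpNeg (A i k.1)) + (A i j + x j) := by rw [rmax_add_neg ha]
          _ = A i k.1 + (mpNeg (A i k.1) + (A i j + x j)) := add_assoc _ _ _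
          _ ≤ A i k.1 + (mpNeg (A i k.1) + cc ⟨i, hiv⟩) :=
              add_le_add_right (add_le_add_right hccge _) _
          _ ≤ A i k.1 + bb k := add_le_add_right hbge _
          _ ≤ _ := add_le_add_right (le_max_right _ _) _
    exact rmax_cancel ha (h1.trans h2)
  have hfin := main_solve MM hwd bb xK hstep ⟨i0, hiv0⟩
  exact hfin
end
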